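/- arXiv:0811.2806 — 2 statements merged into one kernel-verified Lean document; each statement's English description precedes it below -/
import Mathlib

section
/- Let s be irrational with approximation exponent μ(s), let Λ_s = [[1,0],[s,1]]·ℤ², and let g_t = diag(e^{t/2}, e^{-t/2}). Then limsup_{t→∞} log α₁(g_{-t} Λ_s)/t = 1/2 - 1/μ(s). -/
open MeasureTheory Filter Matrix Real ENNReal

noncomputable section

/-- `SL(n, ℝ)`. -/
abbrev SLR (n : ℕ) := Matrix.SpecialLinearGroup (Fin n) ℝ

instance (n : ℕ) : TopologicalSpace (SLR n) :=
  TopologicalSpace.induced (fun g => (g : Matrix (Fin n) (Fin n) ℝ)) inferInstance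

/-- The image of `SL(n, ℤ)` in `SL(n, ℝ)`. -/
def latticeGamma (n : ℕ) : Subgroup (SLR n) :=
  (Matrix.SpecialLinearGroup.map (n := Fin n) (Int.castRingHom ℝ)).range

/-- The space of unimodular lattices `X_n = SL(n,ℝ)/SL(n,ℤ)`. -/
abbrev LatticeSpace (n : ℕ) := SLR n ⧸ latticeGamma n

instance (n : ℕ) : MeasurableSpace (LatticeSpace n) := borel _

/-- The real vector `g · m` of the lattice `g ℤⁿ` coming from the integer vector `m`. -/
def vecOf (n : ℕ) (g : SLR n) (m : Fin n → ℤ) : Fin n → ℝ :=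
  (g : Matrix (Fin n) (Fin n) ℝ).mulVec (fun i => (m i : ℝ))

/-- Euclidean norm on `Fin n → ℝ`. -/
def eNorm {n : ℕ} (v : Fin n → ℝ) : ℝ := ‖(WithLp.equiv 2 (Fin n → ℝ)).symm v‖

/-- The lattice `Λ` contains a nonzero vector lying in `A`. -/
def Intersects (n : ℕ) (Λ : LatticeSpace n) (A : Set (Fin n → ℝ)) : Prop :=
  ∀ g : SLR n, (QuotientGroup.mk g : LatticeSpace n) = Λ →
    ∃ m : Fin n → ℤ, m ≠ 0 ∧ vecOf n g m ∈ A

/-- `α₁(Λ) = sup_{0 ≠ v ∈ Λ} 1/‖v‖` (Euclidean norm). -/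
def alpha1 (n : ℕ) (Λ : LatticeSpace n) : ℝ :=
  sSup {r : ℝ | ∃ g : SLR n, (QuotientGroup.mk g : LatticeSpace n) = Λ ∧
    ∃ m : Fin n → ℤ, m ≠ 0 ∧ r = 1 / eNorm (vecOf n g m)}

/-- The horocycle matrix `h_t = [[1,t],[0,1]]`. -/
def hMat (t : ℝ) : SLR 2 := ⟨!![1, t; 0, 1], by simp [Matrix.det_fin_two_of]⟩

/-- The matrix `[[1,0],[s,1]]`, so that `gMat s · ℤ² = Λ_s = {(m, sm+n)}`. -/
def gMat (s : ℝ) : SLR 2 := ⟨!![1, 0; s, 1], by simp [Matrix.det_fin_two_of]⟩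

/-- The point `Λ_s` of the space of lattices. -/
def LambdaS (s : ℝ) : LatticeSpace 2 := QuotientGroup.mk (gMat s)

/-- The approximation exponent `μ(s)`, valued in `[0,∞]`:
the sup of all `ν` such that `|s - p/q| < q^{-ν}` has infinitely many rational solutions. -/
def approxExp (s : ℝ) : ℝ≥0∞ :=
  ⨆ (ν : ℝ) (_ : {pq : ℤ × ℕ+ |
    |s - (pq.1 : ℝ) / ((pq.2 : ℕ) : ℝ)| < ((pq.2 : ℕ) : ℝ) ^ (-ν)}.Infinite),
    ENNReal.ofReal ν

/-- The diagonal matrix `diag(e^{t/2}, e^{-t/2})`. -/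
def aMat (t : ℝ) : SLR 2 := ⟨!![Real.exp (t / 2), 0; 0, Real.exp (-(t / 2))],
  by simp [Matrix.det_fin_two_of, ← Real.exp_add]⟩

-- computational lemmas
def Bmat (s t : ℝ) : SLR 2 := aMat (-t) * gMat s

lemma vec_eq (s t : ℝ) (m : Fin 2 → ℤ) :
    vecOf 2 (Bmat s t) m =
      ![Real.exp (-(t/2)) * (m 0 : ℝ), Real.exp (t/2) * (s * (m 0 : ℝ) + (m 1 : ℝ))] := by
  funext i
  rw [vecOf, Bmat, Matrix.SpecialLinearGroup.coe_mul]
  fin_cases i <;>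
    simp [vecOf, Bmat, aMat, gMat, Matrix.SpecialLinearGroup.coe_mul, Matrix.mulVec,
      dotProduct, Fin.sum_univ_two, Matrix.mul_apply] <;> ring_nf <;> tauto

lemma eNorm_pair (v : Fin 2 → ℝ) : eNorm v = Real.sqrt (v 0 ^ 2 + v 1 ^ 2) := by
  rw [eNorm]
  rw [show ((WithLp.equiv 2 (Fin 2 → ℝ)).symm v) = (WithLp.toLp 2 v : EuclideanSpace ℝ (Fin 2)) from rfl]
  rw [EuclideanSpace.norm_eq]
  simp [Fin.sum_univ_two, sq_abs]
def Nval (s t : ℝ) (m : Fin 2 → ℤ) : ℝ := eNorm (vecOf 2 (Bmat s t) m)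

lemma Nval_eq (s t : ℝ) (m : Fin 2 → ℤ) :
    Nval s t m = Real.sqrt ((Real.exp (-(t/2)) * (m 0 : ℝ))^2
      + (Real.exp (t/2) * (s * (m 0 : ℝ) + (m 1 : ℝ)))^2) := by
  rw [Nval, vec_eq, eNorm_pair]; simp

lemma Nval_ge_fst (s t : ℝ) (m : Fin 2 → ℤ) :
    Real.exp (-(t/2)) * |(m 0 : ℝ)| ≤ Nval s t m := by
  rw [Nval_eq]
  have : Real.exp (-(t/2)) * |(m 0 : ℝ)| = |Real.exp (-(t/2)) * (m 0 : ℝ)| := by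
    rw [abs_mul, abs_of_pos (Real.exp_pos _)]
  rw [this, ← Real.sqrt_sq_eq_abs]
  exact Real.sqrt_le_sqrt (by nlinarith [sq_nonneg (Real.exp (t/2) * (s * (m 0 : ℝ) + (m 1 : ℝ)))])

lemma Nval_ge_snd (s t : ℝ) (m : Fin 2 → ℤ) :
    Real.exp (t/2) * |s * (m 0 : ℝ) + (m 1 : ℝ)| ≤ Nval s t m := by
  rw [Nval_eq]
  have : Real.exp (t/2) * |s * (m 0 : ℝ) + (m 1 : ℝ)|
      = |Real.exp (t/2) * (s * (m 0 : ℝ) + (m 1 : ℝ))| := by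
    rw [abs_mul, abs_of_pos (Real.exp_pos _)]
  rw [this, ← Real.sqrt_sq_eq_abs]
  exact Real.sqrt_le_sqrt (by nlinarith [sq_nonneg (Real.exp (-(t/2)) * (m 0 : ℝ))])

lemma Nval_pos (s t : ℝ) (hs : Irrational s) (m : Fin 2 → ℤ) (hm : m ≠ 0) :
    0 < Nval s t m := by
  by_cases h0 : m 0 = 0
  · have h1 : m 1 ≠ 0 := by
      intro h1; apply hm; funext i; fin_cases i <;> simp [h0, h1]
    have : (0:ℝ) < Real.exp (t/2) * |s * (m 0 : ℝ) + (m 1 : ℝ)| := by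
      apply mul_pos (Real.exp_pos _)
      rw [h0]; push_cast; simp only [mul_zero, zero_add]
      exact abs_pos.mpr (by exact_mod_cast h1)
    linarith [Nval_ge_snd s t m]
  · have : (0:ℝ) < Real.exp (-(t/2)) * |(m 0 : ℝ)| := by
      apply mul_pos (Real.exp_pos _)
      exact abs_pos.mpr (by exact_mod_cast h0)
    linarith [Nval_ge_fst s t m]

lemma Nval_ge_exp (s t : ℝ) (ht : 0 ≤ t) (m : Fin 2 → ℤ) (hm : m ≠ 0) :
    Real.exp (-(t/2)) ≤ Nval s t m := by
  by_cases h0 : m 0 = 0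
  · have h1 : m 1 ≠ 0 := by
      intro h1; apply hm; funext i; fin_cases i <;> simp [h0, h1]
    have h2 : (1:ℝ) ≤ |s * (m 0 : ℝ) + (m 1 : ℝ)| := by
      rw [h0]; push_cast; simp only [mul_zero, zero_add]
      exact_mod_cast Int.one_le_abs h1
    calc Real.exp (-(t/2)) ≤ Real.exp (t/2) := Real.exp_le_exp.2 (by linarith)
      _ ≤ Real.exp (t/2) * |s * (m 0 : ℝ) + (m 1 : ℝ)| := le_mul_of_one_le_right (Real.exp_pos _).le h2
      _ ≤ _ := Nval_ge_snd s t m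
  · have h2 : (1:ℝ) ≤ |(m 0 : ℝ)| := by exact_mod_cast Int.one_le_abs h0
    calc Real.exp (-(t/2)) ≤ Real.exp (-(t/2)) * |(m 0 : ℝ)| :=
        le_mul_of_one_le_right (Real.exp_pos _).le h2
      _ ≤ _ := Nval_ge_fst s t m
lemma int_mulVec_ne_zero (δ : Matrix.SpecialLinearGroup (Fin 2) ℤ) (m : Fin 2 → ℤ)
    (hm : m ≠ 0) : (δ : Matrix (Fin 2) (Fin 2) ℤ).mulVec m ≠ 0 := by
  intro h
  apply hm
  have := congrArg ((δ⁻¹ : Matrix.SpecialLinearGroup (Fin 2) ℤ) : Matrix (Fin 2) (Fin 2) ℤ).mulVec h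
  rwa [Matrix.mulVec_mulVec, ← Matrix.SpecialLinearGroup.coe_mul, inv_mul_cancel,
    Matrix.SpecialLinearGroup.coe_one, Matrix.one_mulVec, Matrix.mulVec_zero] at this

lemma map_mulVec (δ : Matrix.SpecialLinearGroup (Fin 2) ℤ) (m : Fin 2 → ℤ) :
    ((Matrix.SpecialLinearGroup.map (Int.castRingHom ℝ) δ : SLR 2) :
        Matrix (Fin 2) (Fin 2) ℝ).mulVec (fun i => (m i : ℝ))
      = fun i => (((δ : Matrix (Fin 2) (Fin 2) ℤ).mulVec m) i : ℝ) := by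
  funext i
  simp [Matrix.SpecialLinearGroup.map_apply_coe, Matrix.mulVec, dotProduct, Fin.sum_univ_two,
    Matrix.map_apply]

lemma alpha1_set_eq (s t : ℝ) :
    {r : ℝ | ∃ g : SLR 2, (QuotientGroup.mk g : LatticeSpace 2) = QuotientGroup.mk (Bmat s t) ∧
      ∃ m : Fin 2 → ℤ, m ≠ 0 ∧ r = 1 / eNorm (vecOf 2 g m)}
    = {r : ℝ | ∃ m : Fin 2 → ℤ, m ≠ 0 ∧ r = 1 / Nval s t m} := by
  ext r
  constructor
  · rintro ⟨g, hg, m, hm, rfl⟩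
    have hmem : (Bmat s t)⁻¹ * g ∈ latticeGamma 2 := by
      exact QuotientGroup.eq.mp hg.symm
    obtain ⟨δ, hδ⟩ := hmem
    have hgeq : g = Bmat s t * Matrix.SpecialLinearGroup.map (Int.castRingHom ℝ) δ := by
      rw [hδ]; group
    refine ⟨(δ : Matrix (Fin 2) (Fin 2) ℤ).mulVec m, int_mulVec_ne_zero δ m hm, ?_⟩
    congr 1
    rw [Nval, hgeq]
    congr 1
    rw [vecOf, vecOf, Matrix.SpecialLinearGroup.coe_mul, ← Matrix.mulVec_mulVec, map_mulVec]
  · rintro ⟨m, hm, rfl⟩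
    exact ⟨Bmat s t, rfl, m, hm, rfl⟩
lemma alpha1_eq (s t : ℝ) :
    alpha1 2 (QuotientGroup.mk (Bmat s t)) = sSup {r : ℝ | ∃ m : Fin 2 → ℤ, m ≠ 0 ∧ r = 1 / Nval s t m} := by
  rw [alpha1, alpha1_set_eq]

lemma bddAbove_set (s t : ℝ) (ht : 0 ≤ t) :
    BddAbove {r : ℝ | ∃ m : Fin 2 → ℤ, m ≠ 0 ∧ r = 1 / Nval s t m} := by
  refine ⟨Real.exp (t/2), ?_⟩
  rintro r ⟨m, hm, rfl⟩
  rw [show Real.exp (t/2) = 1 / Real.exp (-(t/2)) by rw [Real.exp_neg]; field_simp]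
  exact one_div_le_one_div_of_le (Real.exp_pos _) (Nval_ge_exp s t ht m hm)

lemma set_nonempty (s t : ℝ) :
    {r : ℝ | ∃ m : Fin 2 → ℤ, m ≠ 0 ∧ r = 1 / Nval s t m}.Nonempty := by
  refine ⟨1 / Nval s t ![0,1], ![0,1], ?_, rfl⟩
  intro h
  have := congrFun h 1
  simp at this

lemma Nval_basis (s t : ℝ) : Nval s t ![0,1] = Real.exp (t/2) := by
  rw [Nval_eq]
  norm_num
  rw [Real.sqrt_sq (Real.exp_pos _).le]

lemma alpha1_ge (s t : ℝ) (ht : 0 ≤ t) (m : Fin 2 → ℤ) (hm : m ≠ 0) :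
    1 / Nval s t m ≤ alpha1 2 (QuotientGroup.mk (Bmat s t)) := by
  rw [alpha1_eq]
  exact le_csSup (bddAbove_set s t ht) ⟨m, hm, rfl⟩

lemma alpha1_le (s t b : ℝ) (hb : 0 < b) (h : ∀ m : Fin 2 → ℤ, m ≠ 0 → b ≤ Nval s t m) :
    alpha1 2 (QuotientGroup.mk (Bmat s t)) ≤ 1 / b := by
  rw [alpha1_eq]
  apply csSup_le (set_nonempty s t)
  rintro r ⟨m, hm, rfl⟩
  apply one_div_le_one_div_of_le hb (h m hm)

lemma alpha1_pos (s t : ℝ) (ht : 0 ≤ t) :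
    Real.exp (-(t/2)) ≤ alpha1 2 (QuotientGroup.mk (Bmat s t)) := by
  have h := alpha1_ge s t ht ![0,1] (by intro h; have := congrFun h 1; simp at this)
  rwa [Nval_basis, one_div, ← Real.exp_neg] at h

lemma alpha1_le_exp (s t : ℝ) (hs : Irrational s) (ht : 0 ≤ t) :
    alpha1 2 (QuotientGroup.mk (Bmat s t)) ≤ Real.exp (t/2) := by
  have h := alpha1_le s t (Real.exp (-(t/2))) (Real.exp_pos _) (fun m hm => Nval_ge_exp s t ht m hm)
  rwa [one_div, ← Real.exp_neg, neg_neg] at h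

def fFun (s : ℝ) : ℝ → ℝ :=
  fun t => Real.log (alpha1 2 (QuotientGroup.mk (aMat (-t) * gMat s))) / t

lemma fFun_eq (s t : ℝ) :
    fFun s t = Real.log (alpha1 2 (QuotientGroup.mk (Bmat s t))) / t := rfl

lemma fFun_le_half (s : ℝ) (hs : Irrational s) (t : ℝ) (ht : 1 ≤ t) : fFun s t ≤ 1/2 := by
  rw [fFun_eq]
  rw [div_le_iff₀ (by linarith : (0:ℝ) < t)]
  have h1 : alpha1 2 (QuotientGroup.mk (Bmat s t)) ≤ Real.exp (t/2) :=
    alpha1_le_exp s t hs (by linarith)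
  calc Real.log (alpha1 2 (QuotientGroup.mk (Bmat s t))) ≤ Real.log (Real.exp (t/2)) :=
        Real.log_le_log (lt_of_lt_of_le (Real.exp_pos _) (alpha1_pos s t (by linarith))) h1
    _ = t/2 := Real.log_exp _
    _ = 1/2 * t := by ring

lemma half_le_fFun (s : ℝ) (t : ℝ) (ht : 1 ≤ t) : -(1/2) ≤ fFun s t := by
  rw [fFun_eq]
  rw [le_div_iff₀ (by linarith : (0:ℝ) < t)]
  have h1 : Real.exp (-(t/2)) ≤ alpha1 2 (QuotientGroup.mk (Bmat s t)) :=
    alpha1_pos s t (by linarith)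
  calc -(1/2) * t = -(t/2) := by ring
    _ = Real.log (Real.exp (-(t/2))) := (Real.log_exp _).symm
    _ ≤ _ := Real.log_le_log (Real.exp_pos _) h1
def Tset (s ν : ℝ) : Set (ℤ × ℕ+) :=
  {pq : ℤ × ℕ+ | |s - (pq.1 : ℝ) / ((pq.2 : ℕ) : ℝ)| < ((pq.2 : ℕ) : ℝ) ^ (-ν)}

lemma approxExp_eq (s : ℝ) :
    approxExp s = ⨆ (ν : ℝ) (_ : (Tset s ν).Infinite), ENNReal.ofReal ν := rfl

lemma Tset_mono (s : ℝ) {ν ν' : ℝ} (h : ν ≤ ν') : Tset s ν' ⊆ Tset s ν := by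
  rintro ⟨p, q⟩ hpq
  simp only [Tset, Set.mem_setOf_eq] at hpq ⊢
  refine lt_of_lt_of_le hpq ?_
  exact Real.rpow_le_rpow_of_exponent_le (by exact_mod_cast q.one_le) (by linarith)

lemma infinite_of_lt_approxExp {s : ℝ} {ν : ℝ} (h : ENNReal.ofReal ν < approxExp s) :
    (Tset s ν).Infinite := by
  rw [approxExp_eq, lt_iSup_iff] at h
  obtain ⟨ν', hν'⟩ := h
  rw [lt_iSup_iff] at hν'
  obtain ⟨hinf, hlt⟩ := hν'
  have : ν < ν' := by
    by_contra hc
    exact absurd (ENNReal.ofReal_le_ofReal (not_lt.mp hc)) (not_le.mpr hlt)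
  exact Set.Infinite.mono (Tset_mono s this.le) hinf

lemma le_approxExp_of_infinite {s : ℝ} {ν : ℝ} (h : (Tset s ν).Infinite) :
    ENNReal.ofReal ν ≤ approxExp s := by
  rw [approxExp_eq]
  refine le_trans ?_ (le_iSup (fun ν : ℝ => ⨆ _ : (Tset s ν).Infinite, ENNReal.ofReal ν) ν)
  exact le_iSup (fun _ : (Tset s ν).Infinite => ENNReal.ofReal ν) h

lemma approxExp_ge_two {s : ℝ} (hs : Irrational s) : ENNReal.ofReal 2 ≤ approxExp s := by
  apply le_approxExp_of_infinite
  have hinf := Real.infinite_rat_abs_sub_lt_one_div_den_sq_of_irrational hs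
  have hmap : (Tset s 2) ⊇ (fun q : ℚ => ((q.num, ⟨q.den, q.pos⟩) : ℤ × ℕ+)) ''
      {q : ℚ | |s - q| < 1 / (q.den : ℝ) ^ 2} := by
    rintro ⟨p, q⟩ ⟨r, hr, heq⟩
    simp only [Prod.ext_iff] at heq
    obtain ⟨h1, h2⟩ := heq
    have hden : (q : ℕ) = r.den := by rw [← h2]; rfl
    simp only [Tset, Set.mem_setOf_eq, ← h1, hden]
    have : ((r.den : ℝ)) ^ (-(2:ℝ)) = 1 / (r.den : ℝ) ^ 2 := by
      rw [Real.rpow_neg (by positivity),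
        show ((2:ℝ)) = ((2:ℕ):ℝ) by norm_num, Real.rpow_natCast, one_div]
    rw [this]
    have : ((r.num : ℝ)) / ((r.den : ℝ)) = (r : ℝ) := by
      rw [Rat.cast_def]
    rwa [this]
  apply Set.Infinite.mono hmap
  apply Set.Infinite.image _ hinf
  intro a _ b _ hab
  simp only [Prod.ext_iff] at hab
  obtain ⟨h1, h2⟩ := hab
  have h2' : a.den = b.den := by
    have := congrArg (fun x : ℕ+ => (x : ℕ)) h2
    simpa using this
  exact Rat.ext h1 h2'

lemma exists_large_q {s ν : ℝ} (hν : 0 ≤ ν) (hinf : (Tset s ν).Infinite) (Q : ℕ) :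
    ∃ pq ∈ Tset s ν, Q < (pq.2 : ℕ) := by
  by_contra hc
  push_neg at hc
  apply hinf
  set M : ℤ := ⌈(|s| + 1) * Q⌉ with hM
  have hsub : Tset s ν ⊆ (Set.Icc (-M) M) ×ˢ ((fun q : ℕ+ => (q : ℕ)) ⁻¹' Set.Iic Q) := by
    rintro ⟨p, q⟩ hpq
    have hq := hc (p, q) hpq
    constructor
    · have hq1 : (1:ℝ) ≤ ((q:ℕ):ℝ) := by exact_mod_cast q.one_le
      have hb : ((q:ℕ):ℝ) ^ (-ν) ≤ 1 :=
        Real.rpow_le_one_of_one_le_of_nonpos hq1 (by linarith)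
      have habs : |s - (p:ℝ)/((q:ℕ):ℝ)| < 1 := lt_of_lt_of_le hpq hb
      have hqpos : (0:ℝ) < ((q:ℕ):ℝ) := by linarith
      have hp : |(p:ℝ)| ≤ (|s| + 1) * ((q:ℕ):ℝ) := by
        have h1 : |(p:ℝ)/((q:ℕ):ℝ)| ≤ |s| + 1 := by
          have := abs_sub_abs_le_abs_sub ((p:ℝ)/((q:ℕ):ℝ)) s
          have h2 : |(p:ℝ)/((q:ℕ):ℝ) - s| < 1 := by rwa [abs_sub_comm]
          linarith
        rw [abs_div, abs_of_pos hqpos, div_le_iff₀ hqpos] at h1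
        exact h1
      have hqQ : ((q:ℕ):ℝ) ≤ (Q:ℝ) := by exact_mod_cast hq
      have hp2 : |(p:ℝ)| ≤ (|s| + 1) * (Q:ℝ) := by
        refine le_trans hp ?_
        apply mul_le_mul_of_nonneg_left hqQ (by positivity)
      have : |p| ≤ M := by
        have hMle : ((|s| + 1) * (Q:ℝ)) ≤ (M:ℝ) := by
          rw [hM]; push_cast; exact Int.le_ceil _
        have : |(p:ℝ)| ≤ (M:ℝ) := le_trans hp2 hMle
        exact_mod_cast this
      exact abs_le.mp this
    · simp only [Set.mem_preimage, Set.mem_Iic]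
      exact hq
  exact Set.Finite.subset ((Set.finite_Icc (-M) M).prod
    ((Set.finite_Iic Q).preimage (PNat.coe_injective.injOn))) hsub
set_option maxHeartbeats 1000000 in
lemma freq_lower (s : ℝ) (hs : Irrational s) {ν : ℝ} (hν : 1 ≤ ν)
    (hinf : (Tset s ν).Infinite) {ε : ℝ} (hε : 0 < ε) :
    ∃ᶠ t in atTop, 1/2 - 1/ν - ε ≤ fFun s t := by
  rw [frequently_atTop]
  intro t₀
  set C := Real.exp (max (t₀/ν) (Real.log 2/(ε*ν))) with hC
  obtain ⟨⟨p, q⟩, hpq, hQ⟩ := exists_large_q (by linarith) hinf (max 1 ⌈C⌉₊)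
  simp only [Tset, Set.mem_setOf_eq] at hpq
  have hq1 : (1:ℝ) ≤ ((q:ℕ):ℝ) := by exact_mod_cast q.one_le
  have hqR : (0:ℝ) < ((q:ℕ):ℝ) := by linarith
  have hq2 : C ≤ ((q:ℕ):ℝ) := by
    have h1 : C ≤ (⌈C⌉₊ : ℝ) := Nat.le_ceil C
    have h2 : (⌈C⌉₊:ℕ) ≤ (q:ℕ) := le_of_lt (lt_of_le_of_lt (le_max_right _ _) hQ)
    exact le_trans h1 (by exact_mod_cast h2)
  have hqge2 : (2:ℝ) ≤ ((q:ℕ):ℝ) := by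
    have : 1 < (q:ℕ) := lt_of_le_of_lt (le_max_left _ _) hQ
    exact_mod_cast this
  set L := Real.log ((q:ℕ):ℝ) with hL
  have hLpos : 0 < L := Real.log_pos (by linarith)
  have hmaxL : max (t₀/ν) (Real.log 2/(ε*ν)) ≤ L := by
    have := Real.log_le_log (Real.exp_pos _) hq2
    rwa [Real.log_exp] at this
  set t := ν * L with ht
  have htpos : 0 < t := mul_pos (by linarith) hLpos
  refine ⟨t, ?_, ?_⟩
  · have h1 : t₀/ν ≤ L := le_trans (le_max_left _ _) hmaxL
    have := mul_le_mul_of_nonneg_left h1 (by linarith : (0:ℝ) ≤ ν)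
    rw [mul_div_cancel₀ _ (by linarith : ν ≠ 0)] at this
    linarith
  -- exponential identities
  have hehalf : Real.exp (t/2) = ((q:ℕ):ℝ) ^ (ν/2) := by
    rw [Real.rpow_def_of_pos hqR]; congr 1; rw [ht, hL]; ring
  have hehalf' : Real.exp (-(t/2)) = ((q:ℕ):ℝ) ^ (-(ν/2)) := by
    rw [Real.rpow_def_of_pos hqR]; congr 1; rw [ht, hL]; ring
  set m : Fin 2 → ℤ := ![((q:ℕ):ℤ), -p] with hm
  have hm0 : ((m 0 : ℤ) : ℝ) = ((q:ℕ):ℝ) := by simp [hm]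
  have hm1 : ((m 1 : ℤ) : ℝ) = -(p:ℝ) := by simp [hm]
  have hmne : m ≠ 0 := by
    intro h
    have := congrFun h 0
    simp [hm] at this
  have hsq : |s * ((q:ℕ):ℝ) + (-(p:ℝ))| < ((q:ℕ):ℝ) ^ (1 - ν) := by
    have h1 : s * ((q:ℕ):ℝ) + (-(p:ℝ)) = (s - (p:ℝ)/((q:ℕ):ℝ)) * ((q:ℕ):ℝ) := by
      field_simp
      ring
    rw [h1, abs_mul, abs_of_pos hqR]
    have h2 : ((q:ℕ):ℝ) ^ (1 - ν) = ((q:ℕ):ℝ) ^ (-ν) * ((q:ℕ):ℝ) := by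
      rw [show (1 - ν) = -ν + 1 by ring, Real.rpow_add hqR, Real.rpow_one]
    rw [h2]
    exact mul_lt_mul_of_pos_right hpq hqR
  set X := ((q:ℕ):ℝ) ^ (1 - ν/2) with hX
  have hXpos : 0 < X := Real.rpow_pos_of_pos hqR _
  have he1 : ((q:ℕ):ℝ) ^ (-(ν/2)) * ((q:ℕ):ℝ) = X := by
    rw [hX, show (1 - ν/2) = -(ν/2) + 1 by ring, Real.rpow_add hqR, Real.rpow_one]
  have he2 : ((q:ℕ):ℝ) ^ (ν/2) * ((q:ℕ):ℝ) ^ (1 - ν) = X := by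
    rw [hX, ← Real.rpow_add hqR]; congr 1; ring
  have hNle : Nval s t m ≤ Real.sqrt 2 * X := by
    rw [Nval_eq, hm0, hm1, hehalf, hehalf']
    have hb : |((q:ℕ):ℝ) ^ (ν/2) * (s * ((q:ℕ):ℝ) + (-(p:ℝ)))| ≤ X := by
      rw [abs_mul, abs_of_pos (Real.rpow_pos_of_pos hqR _)]
      calc ((q:ℕ):ℝ) ^ (ν/2) * |s * ((q:ℕ):ℝ) + (-(p:ℝ))|
          ≤ ((q:ℕ):ℝ) ^ (ν/2) * (((q:ℕ):ℝ) ^ (1 - ν)) :=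
            mul_le_mul_of_nonneg_left hsq.le (Real.rpow_pos_of_pos hqR _).le
        _ = X := he2
    have hsum : (((q:ℕ):ℝ) ^ (-(ν/2)) * ((q:ℕ):ℝ))^2
        + (((q:ℕ):ℝ) ^ (ν/2) * (s * ((q:ℕ):ℝ) + (-(p:ℝ))))^2 ≤ 2 * X^2 := by
      have h1 : (((q:ℕ):ℝ) ^ (-(ν/2)) * ((q:ℕ):ℝ))^2 = X^2 := by rw [he1]
      nlinarith [abs_nonneg (((q:ℕ):ℝ) ^ (ν/2) * (s * ((q:ℕ):ℝ) + (-(p:ℝ)))),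
        sq_abs (((q:ℕ):ℝ) ^ (ν/2) * (s * ((q:ℕ):ℝ) + (-(p:ℝ))))]
    calc Real.sqrt _ ≤ Real.sqrt (2 * X^2) := Real.sqrt_le_sqrt hsum
      _ = Real.sqrt 2 * X := by
          rw [Real.sqrt_mul (by norm_num : (0:ℝ) ≤ 2), Real.sqrt_sq hXpos.le]
  have hNpos : 0 < Nval s t m := Nval_pos s t hs m hmne
  have hinvpos : 0 < 1/(Real.sqrt 2 * X) := by positivity
  have hA : 1/(Real.sqrt 2 * X) ≤ alpha1 2 (QuotientGroup.mk (Bmat s t)) :=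
    le_trans (one_div_le_one_div_of_le hNpos hNle) (alpha1_ge s t htpos.le m hmne)
  have hApos : 0 < alpha1 2 (QuotientGroup.mk (Bmat s t)) := lt_of_lt_of_le hinvpos hA
  rw [fFun_eq, le_div_iff₀ htpos]
  have hlogA : Real.log (1/(Real.sqrt 2 * X)) ≤ Real.log (alpha1 2 (QuotientGroup.mk (Bmat s t))) :=
    Real.log_le_log hinvpos hA
  have hlogval : Real.log (1/(Real.sqrt 2 * X)) = -(Real.log (Real.sqrt 2)) - (1 - ν/2) * L := by
    rw [one_div, Real.log_inv, Real.log_mul (Real.sqrt_ne_zero'.mpr (by norm_num)) hXpos.ne',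
      hX, Real.log_rpow hqR]
    ring
  have hεbound : Real.log (Real.sqrt 2) ≤ ε * ν * L := by
    have h1 : Real.log (Real.sqrt 2) = Real.log 2 / 2 := Real.log_sqrt (by norm_num)
    have hlog2 : (0:ℝ) < Real.log 2 := Real.log_pos (by norm_num)
    have h2 : Real.log 2 / (ε*ν) ≤ L := le_trans (le_max_right _ _) hmaxL
    have hεν : 0 < ε * ν := mul_pos hε (by linarith)
    rw [div_le_iff₀ hεν] at h2
    nlinarith
  have hcancel : (1/ν) * ν = 1 := one_div_mul_cancel (by linarith)
  have key : (1/2 - 1/ν - ε) * t ≤ -(Real.log (Real.sqrt 2)) - (1 - ν/2) * L := by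
    have expand : (1/2 - 1/ν - ε) * t = (ν/2) * L - ((1/ν)*ν) * L - ε*ν*L := by
      rw [ht]; ring
    rw [expand, hcancel]
    linarith [hεbound]
  linarith [hlogA, hlogval.symm.trans_le hlogA, key, hlogval.ge.trans hlogA]
lemma dio_bound (s : ℝ) (hs : Irrational s) {ν : ℝ} (hfin : (Tset s ν).Finite) :
    ∃ c : ℝ, 0 < c ∧ c ≤ 1 ∧ ∀ m n : ℤ, m ≠ 0 →
      min c (|(m:ℝ)| ^ (1 - ν)) ≤ |s * (m:ℝ) + (n:ℝ)| := by
  classical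
  set F : Finset ℝ :=
    insert 1 (hfin.toFinset.image (fun pq : ℤ × ℕ+ => |s * ((pq.2:ℕ):ℝ) - (pq.1:ℝ)|)) with hF
  have hFne : F.Nonempty := ⟨1, Finset.mem_insert_self _ _⟩
  set c := F.min' hFne with hc
  have hne_val : ∀ (q : ℕ+) (p : ℤ), s * ((q:ℕ):ℝ) - (p:ℝ) ≠ 0 := by
    intro q p h
    apply hs
    refine ⟨(p : ℚ) / ((q:ℕ) : ℚ), ?_⟩
    have hq0 : ((q:ℕ):ℝ) ≠ 0 := by
      have : (0:ℝ) < ((q:ℕ):ℝ) := by exact_mod_cast q.pos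
      linarith
    push_cast
    field_simp
    linarith [sub_eq_zero.mp h]
  have hcpos : 0 < c := by
    rw [hc]
    apply (Finset.lt_min'_iff F hFne).mpr
    intro y hy
    rw [hF] at hy
    rcases Finset.mem_insert.mp hy with h1 | h2
    · rw [h1]; norm_num
    · obtain ⟨pq, _, rfl⟩ := Finset.mem_image.mp h2
      exact abs_pos.mpr (hne_val pq.2 pq.1)
  have hcle : c ≤ 1 := Finset.min'_le F 1 (Finset.mem_insert_self _ _)
  refine ⟨c, hcpos, hcle, ?_⟩
  -- first positive case
  have key : ∀ (q : ℕ+) (p : ℤ), min c ((((q:ℕ):ℝ)) ^ (1 - ν)) ≤ |s * ((q:ℕ):ℝ) - (p:ℝ)| := by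
    intro q p
    have hqR : (0:ℝ) < ((q:ℕ):ℝ) := by exact_mod_cast q.pos
    by_cases hmem : (p, q) ∈ Tset s ν
    · refine le_trans (min_le_left _ _) ?_
      apply Finset.min'_le
      rw [hF]
      exact Finset.mem_insert_of_mem (Finset.mem_image_of_mem _ (hfin.mem_toFinset.mpr hmem))
    · refine le_trans (min_le_right _ _) ?_
      simp only [Tset, Set.mem_setOf_eq, not_lt] at hmem
      have h1 : ((q:ℕ):ℝ) ^ (1 - ν) = ((q:ℕ):ℝ) ^ (-ν) * ((q:ℕ):ℝ) := by
        rw [show (1 - ν) = -ν + 1 by ring, Real.rpow_add hqR, Real.rpow_one]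
      have h2 : |s * ((q:ℕ):ℝ) - (p:ℝ)| = |s - (p:ℝ)/((q:ℕ):ℝ)| * ((q:ℕ):ℝ) := by
        rw [show s * ((q:ℕ):ℝ) - (p:ℝ) = (s - (p:ℝ)/((q:ℕ):ℝ)) * ((q:ℕ):ℝ) by field_simp,
          abs_mul, abs_of_pos hqR]
      rw [h1, h2]
      exact mul_le_mul_of_nonneg_right hmem hqR.le
  intro m n hm
  rcases lt_trichotomy m 0 with hneg | hzero | hpos
  · set q : ℕ+ := ⟨(-m).toNat, by omega⟩ with hq'
    have htn : (((-m).toNat : ℤ) : ℝ) = -(m:ℝ) := by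
      rw [Int.toNat_of_nonneg (by omega : (0:ℤ) ≤ -m)]; push_cast; ring
    have hcast : ((q:ℕ):ℝ) = -(m:ℝ) := by rw [hq']; exact_mod_cast htn
    have h := key q n
    rw [hcast] at h
    have habs : |(m:ℝ)| = -(m:ℝ) := abs_of_neg (by exact_mod_cast hneg)
    have heq : |s * -(m:ℝ) - (n:ℝ)| = |s * (m:ℝ) + (n:ℝ)| := by
      rw [show s * -(m:ℝ) - (n:ℝ) = -(s * (m:ℝ) + (n:ℝ)) by ring, abs_neg]
    rw [heq] at h
    rw [habs]
    exact h
  · exact absurd hzero hm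
  · set q : ℕ+ := ⟨m.toNat, by omega⟩ with hq'
    have htn : ((m.toNat : ℤ) : ℝ) = (m:ℝ) := by
      rw [Int.toNat_of_nonneg (by omega : (0:ℤ) ≤ m)]
    have hcast : ((q:ℕ):ℝ) = (m:ℝ) := by rw [hq']; exact_mod_cast htn
    have h := key q (-n)
    rw [hcast] at h
    have habs : |(m:ℝ)| = (m:ℝ) := abs_of_pos (by exact_mod_cast hpos)
    have heq : |s * (m:ℝ) - ((-n : ℤ):ℝ)| = |s * (m:ℝ) + (n:ℝ)| := by
      push_cast
      ring_nf
    rw [heq] at h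
    rw [habs]
    exact h
set_option maxHeartbeats 1000000 in
lemma f_upper (s : ℝ) (hs : Irrational s) {ν : ℝ} (hν : 2 < ν)
    (hfin : (Tset s ν).Finite) : ∀ᶠ t in atTop, fFun s t ≤ 1/2 - 1/ν := by
  obtain ⟨c, hcpos, hcle, hkey⟩ := dio_bound s hs hfin
  have hν0 : (0:ℝ) < ν := by linarith
  have hfrac : 0 < 1 - 1/ν := by
    have : 1/ν < 1/2 := by
      rw [div_lt_div_iff₀ hν0 (by norm_num)]; linarith
    linarith
  filter_upwards [eventually_ge_atTop (max 1 ((-Real.log c)/(1 - 1/ν)))] with t ht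
  have ht1 : (1:ℝ) ≤ t := le_trans (le_max_left _ _) ht
  have htpos : (0:ℝ) < t := by linarith
  have htc : (-Real.log c) ≤ t * (1 - 1/ν) := by
    have h1 : (-Real.log c)/(1 - 1/ν) ≤ t := le_trans (le_max_right _ _) ht
    rw [div_le_iff₀ hfrac] at h1
    linarith
  -- main bound: all nonzero lattice vectors are long
  have hNbound : ∀ m : Fin 2 → ℤ, m ≠ 0 → Real.exp ((1/ν - 1/2) * t) ≤ Nval s t m := by
    intro m hm
    by_cases h0 : m 0 = 0
    · have h1 : m 1 ≠ 0 := by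
        intro h1; apply hm; funext i; fin_cases i <;> simp [h0, h1]
      have h2 : (1:ℝ) ≤ |s * ((m 0 : ℤ):ℝ) + ((m 1 : ℤ):ℝ)| := by
        rw [h0]; push_cast; simp only [mul_zero, zero_add]
        exact_mod_cast Int.one_le_abs h1
      calc Real.exp ((1/ν - 1/2) * t) ≤ Real.exp (t/2) := by
            apply Real.exp_le_exp.2
            have h3 : 1/ν - 1/2 ≤ 1/2 := by
              have : 0 < 1/ν := by positivity
              linarith [hfrac]
            nlinarith
        _ ≤ Real.exp (t/2) * |s * ((m 0 : ℤ):ℝ) + ((m 1 : ℤ):ℝ)| :=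
            le_mul_of_one_le_right (Real.exp_pos _).le h2
        _ ≤ _ := Nval_ge_snd s t m
    · have hd := hkey (m 0) (m 1) h0
      have hx1 : (1:ℝ) ≤ |((m 0 : ℤ):ℝ)| := by exact_mod_cast Int.one_le_abs h0
      have hxpos : (0:ℝ) < |((m 0 : ℤ):ℝ)| := by linarith
      rcases le_total c (|((m 0 : ℤ):ℝ)| ^ (1 - ν)) with hcase | hcase
      · -- min = c : small-q regime
        rw [min_eq_left hcase] at hd
        calc Real.exp ((1/ν - 1/2) * t) ≤ Real.exp (t/2 + Real.log c) := by
              apply Real.exp_le_exp.2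
              have : (1/ν - 1/2) * t = t/2 - t * (1 - 1/ν) := by ring
              rw [this]
              linarith
          _ = Real.exp (t/2) * c := by rw [Real.exp_add, Real.exp_log hcpos]
          _ ≤ Real.exp (t/2) * |s * ((m 0 : ℤ):ℝ) + ((m 1 : ℤ):ℝ)| :=
              mul_le_mul_of_nonneg_left hd (Real.exp_pos _).le
          _ ≤ _ := Nval_ge_snd s t m
      · rw [min_eq_right hcase] at hd
        rcases le_total (|((m 0 : ℤ):ℝ)|) (Real.exp (t/ν)) with hxe | hxe
        · -- x small : use second coordinate
          have h5 : (Real.exp (t/ν)) ^ (1 - ν) ≤ |((m 0 : ℤ):ℝ)| ^ (1 - ν) :=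
            Real.rpow_le_rpow_of_nonpos hxpos hxe (by linarith)
          have h6 : (Real.exp (t/ν)) ^ (1 - ν) = Real.exp ((t/ν) * (1 - ν)) := by
            rw [Real.rpow_def_of_pos (Real.exp_pos _), Real.log_exp]
          rw [h6] at h5
          calc Real.exp ((1/ν - 1/2) * t)
              = Real.exp (t/2) * Real.exp ((t/ν) * (1 - ν)) := by
                rw [← Real.exp_add]; congr 1; field_simp; ring
            _ ≤ Real.exp (t/2) * |((m 0 : ℤ):ℝ)| ^ (1 - ν) :=
                mul_le_mul_of_nonneg_left h5 (Real.exp_pos _).le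
            _ ≤ Real.exp (t/2) * |s * ((m 0 : ℤ):ℝ) + ((m 1 : ℤ):ℝ)| :=
                mul_le_mul_of_nonneg_left hd (Real.exp_pos _).le
            _ ≤ _ := Nval_ge_snd s t m
        · -- x large : use first coordinate
          calc Real.exp ((1/ν - 1/2) * t)
              = Real.exp (-(t/2)) * Real.exp (t/ν) := by
                rw [← Real.exp_add]; congr 1; ring
            _ ≤ Real.exp (-(t/2)) * |((m 0 : ℤ):ℝ)| :=
                mul_le_mul_of_nonneg_left hxe (Real.exp_pos _).le
            _ ≤ _ := Nval_ge_fst s t m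
  -- conclude
  have halpha := alpha1_le s t (Real.exp ((1/ν - 1/2) * t)) (Real.exp_pos _) hNbound
  rw [one_div, ← Real.exp_neg] at halpha
  rw [fFun_eq, div_le_iff₀ htpos]
  have hApos : 0 < alpha1 2 (QuotientGroup.mk (Bmat s t)) :=
    lt_of_lt_of_le (Real.exp_pos _) (alpha1_pos s t htpos.le)
  calc Real.log (alpha1 2 (QuotientGroup.mk (Bmat s t)))
      ≤ Real.log (Real.exp (-((1/ν - 1/2) * t))) := Real.log_le_log hApos halpha
    _ = -((1/ν - 1/2) * t) := Real.log_exp _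
    _ = (1/2 - 1/ν) * t := by ring
lemma L_bounds (s : ℝ) (hs : Irrational s) :
    (∀ᶠ t in (atTop : Filter ℝ), fFun s t ≤ 1/2) ∧
    (∀ᶠ t in (atTop : Filter ℝ), -(1/2) ≤ fFun s t) := by
  constructor
  · filter_upwards [eventually_ge_atTop (1:ℝ)] with t ht
    exact fFun_le_half s hs t ht
  · filter_upwards [eventually_ge_atTop (1:ℝ)] with t ht
    exact half_le_fFun s t ht

theorem geodesic_diophantine' (s : ℝ) (hs : Irrational s) :
    ENNReal.ofReal (Filter.limsup
        (fun t : ℝ => Real.log (alpha1 2 (QuotientGroup.mk (aMat (-t) * gMat s))) / t)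
        atTop) = 2⁻¹ - (approxExp s)⁻¹ := by
  obtain ⟨hb_up, hb_lo⟩ := L_bounds s hs
  set L := Filter.limsup (fFun s) atTop with hL
  have hBdd : IsBoundedUnder (· ≤ ·) atTop (fFun s) := ⟨1/2, hb_up⟩
  have hCob : IsCoboundedUnder (· ≤ ·) atTop (fFun s) :=
    isCoboundedUnder_le_of_eventually_le atTop hb_lo
  have hgoal : Filter.limsup
      (fun t : ℝ => Real.log (alpha1 2 (QuotientGroup.mk (aMat (-t) * gMat s))) / t) atTop = L := rfl
  rw [hgoal]
  have hμ2 : ENNReal.ofReal 2 ≤ approxExp s := approxExp_ge_two hs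
  have hLle : L ≤ 1/2 := limsup_le_of_le hCob hb_up
  -- lower bound building block
  have hlow : ∀ ν : ℝ, 1 ≤ ν → ENNReal.ofReal ν < approxExp s → 1/2 - 1/ν ≤ L := by
    intro ν hν1 hνlt
    have hinf := infinite_of_lt_approxExp hνlt
    apply _root_.le_of_forall_pos_le_add
    intro ε hε
    have := le_limsup_of_frequently_le (freq_lower s hs hν1 hinf hε) hBdd
    linarith
  by_cases hμtop : approxExp s = ⊤
  · -- Liouville case : L = 1/2
    have hLge : 1/2 ≤ L := by
      apply _root_.le_of_forall_pos_le_add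
      intro ε hε
      have hν1 : (1:ℝ) ≤ max 1 (2/ε) := le_max_left _ _
      have h1 := hlow (max 1 (2/ε)) hν1 (by rw [hμtop]; exact ENNReal.ofReal_lt_top)
      have h2 : 1/(max 1 (2/ε)) ≤ ε/2 := by
        rw [div_le_iff₀ (by linarith : (0:ℝ) < max 1 (2/ε))]
        have : 2/ε ≤ max 1 (2/ε) := le_max_right _ _
        rw [div_le_iff₀ hε] at this
        nlinarith
      linarith
    have hLeq : L = 1/2 := le_antisymm hLle hLge
    rw [hLeq, hμtop]
    simp only [ENNReal.inv_top, tsub_zero]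
    rw [show (1/2 : ℝ) = (2:ℝ)⁻¹ by norm_num, ENNReal.ofReal_inv_of_pos (by norm_num)]
    norm_num
  · -- finite exponent case
    set ν₀ := (approxExp s).toReal with hν₀
    have hμeq : approxExp s = ENNReal.ofReal ν₀ := (ENNReal.ofReal_toReal hμtop).symm
    have hν₀2 : 2 ≤ ν₀ := by
      have := ENNReal.toReal_mono hμtop hμ2
      rwa [ENNReal.toReal_ofReal (by norm_num : (0:ℝ) ≤ 2)] at this
    have hν₀pos : 0 < ν₀ := by linarith
    -- upper bound
    have hup : ∀ ν : ℝ, ν₀ < ν → L ≤ 1/2 - 1/ν := by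
      intro ν hν
      have hfin : (Tset s ν).Finite := by
        by_contra hc
        have h1 : ENNReal.ofReal ν ≤ approxExp s := le_approxExp_of_infinite hc
        rw [hμeq] at h1
        have h2 : ENNReal.ofReal ν₀ < ENNReal.ofReal ν :=
          (ENNReal.ofReal_lt_ofReal_iff (by linarith)).mpr hν
        exact absurd h1 (not_le.mpr h2)
      exact limsup_le_of_le hCob (f_upper s hs (by linarith) hfin)
    -- pass to the limit ν → ν₀⁺
    have hcont : ContinuousAt (fun ν : ℝ => 1/2 - 1/ν) ν₀ := by
      have h1 : ContinuousAt (fun ν : ℝ => 1/ν) ν₀ :=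
        ContinuousAt.div continuousAt_const continuousAt_id hν₀pos.ne'
      exact continuousAt_const.sub h1
    have hupper : L ≤ 1/2 - 1/ν₀ := by
      have htend : Filter.Tendsto (fun ν : ℝ => 1/2 - 1/ν) (nhdsWithin ν₀ (Set.Ioi ν₀))
          (nhds (1/2 - 1/ν₀)) := hcont.continuousWithinAt.tendsto
      refine ge_of_tendsto htend ?_
      filter_upwards [self_mem_nhdsWithin] with ν hν
      exact hup ν hν
    have hlower : 1/2 - 1/ν₀ ≤ L := by
      have htend : Filter.Tendsto (fun ν : ℝ => 1/2 - 1/ν) (nhdsWithin ν₀ (Set.Iio ν₀))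
          (nhds (1/2 - 1/ν₀)) := hcont.continuousWithinAt.tendsto
      refine le_of_tendsto htend ?_
      have hev1 : ∀ᶠ ν in nhdsWithin ν₀ (Set.Iio ν₀), (1:ℝ) < ν :=
        Filter.Eventually.filter_mono nhdsWithin_le_nhds (eventually_gt_nhds (by linarith))
      filter_upwards [self_mem_nhdsWithin, hev1] with ν hν hν1
      apply hlow ν hν1.le
      rw [hμeq]
      exact (ENNReal.ofReal_lt_ofReal_iff hν₀pos).mpr hν
    have hLeq : L = 1/2 - 1/ν₀ := le_antisymm hupper hlower
    rw [hLeq, hμeq, ← ENNReal.ofReal_inv_of_pos hν₀pos,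
      show ((2:ℝ≥0∞)⁻¹) = ENNReal.ofReal 2⁻¹ by
        rw [ENNReal.ofReal_inv_of_pos (by norm_num)]; norm_num,
      ← ENNReal.ofReal_sub _ (by positivity : (0:ℝ) ≤ ν₀⁻¹)]
    congr 1
    rw [one_div, one_div]
/-- For irrational `s`, `limsup_{t→∞} log α₁(g_{-t} Λ_s)/t = 1/2 - 1/μ(s)`
(interpreted as `1/2` when `μ(s) = ∞`). -/
theorem geodesic_diophantine (s : ℝ) (hs : Irrational s) :
    ENNReal.ofReal (Filter.limsup
        (fun t : ℝ => Real.log (alpha1 2 (QuotientGroup.mk (aMat (-t) * gMat s))) / t)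
        atTop) = 2⁻¹ - (approxExp s)⁻¹ :=
  geodesic_diophantine' s hs
end
end

section
/- Let s be irrational with continued fraction convergents p_n/q_n, and set r_n = log q_{n+1} / log q_n. Then the approximation exponent satisfies μ(s) = 1 + limsup_{n→∞} r_n. -/
open Filter Real ENNReal

noncomputable section

namespace CFAux

open GenContFract

variable {s : ℝ}

lemma not_term (hs : Irrational s) (n : ℕ) : ¬(GenContFract.of s).TerminatedAt n := by
  intro h
  have : (GenContFract.of s).Terminates := ⟨n, h⟩
  obtain ⟨q, hq⟩ := (terminates_iff_rat s).mp this
  exact hs ⟨q, hq.symm⟩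

lemma stream_ne_none (hs : Irrational s) (n : ℕ) :
    ∃ ifp : IntFractPair ℝ, IntFractPair.stream s n = some ifp := by
  cases n with
  | zero => exact ⟨_, IntFractPair.stream_zero s⟩
  | succ n =>
      have := not_term hs n
      rw [of_terminatedAt_n_iff_succ_nth_intFractPair_stream_eq_none] at this
      exact Option.ne_none_iff_exists'.mp this

lemma fr_pos (hs : Irrational s) {n : ℕ} {ifp : IntFractPair ℝ}
    (h : IntFractPair.stream s n = some ifp) : 0 < ifp.fr := by
  rcases (IntFractPair.nth_stream_fr_nonneg h).lt_or_eq with h' | h'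
  · exact h'
  · exfalso
    obtain ⟨ifp', h''⟩ := stream_ne_none hs (n + 1)
    rw [IntFractPair.stream_eq_none_of_fr_eq_zero h h'.symm] at h''
    cases h''

lemma one_le_den (hs : Irrational s) (n : ℕ) : (1 : ℝ) ≤ (GenContFract.of s).dens n := by
  have h := GenContFract.succ_nth_fib_le_of_nth_den (v := s) (n := n)
    (Or.inr (not_term hs _))
  calc (1:ℝ) ≤ (Nat.fib (n+1) : ℝ) := by
        exact_mod_cast Nat.one_le_iff_ne_zero.mpr (Nat.fib_pos.mpr n.succ_pos).ne'
    _ ≤ _ := h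

lemma den_pos (hs : Irrational s) (n : ℕ) : (0 : ℝ) < (GenContFract.of s).dens n :=
  lt_of_lt_of_le one_pos (one_le_den hs n)

/-- the recurrence with an integer partial denominator -/
lemma den_rec (hs : Irrational s) (n : ℕ) :
    ∃ b : ℤ, 1 ≤ b ∧
      ((GenContFract.of s).dens (n + 2) = (b : ℝ) * (GenContFract.of s).dens (n + 1) + (GenContFract.of s).dens n) ∧
      ((GenContFract.of s).nums (n + 2) = (b : ℝ) * (GenContFract.of s).nums (n + 1) + (GenContFract.of s).nums n) := by
  have hnt : ¬(GenContFract.of s).TerminatedAt (n + 1) := not_term hs _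
  obtain ⟨gp, hgp⟩ : ∃ gp, (GenContFract.of s).s.get? (n+1) = some gp :=
    Option.ne_none_iff_exists'.mp hnt
  obtain ⟨ha, b, hb⟩ := of_partNum_eq_one_and_exists_int_partDen_eq hgp
  have h1 : (1 : ℝ) ≤ gp.b := of_one_le_get?_partDen (partDen_eq_s_b hgp)
  refine ⟨b, ?_, ?_, ?_⟩
  · exact_mod_cast hb ▸ h1
  · have := dens_recurrence hgp rfl rfl
    rw [this, ha, hb]; ring
  · have := nums_recurrence hgp rfl rfl
    rw [this, ha, hb]; ring

lemma den_succ_ge (hs : Irrational s) (n : ℕ) :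
    (GenContFract.of s).dens (n + 1) + (GenContFract.of s).dens n ≤ (GenContFract.of s).dens (n + 2) := by
  obtain ⟨b, hb1, hrec, -⟩ := den_rec hs n
  rw [hrec]
  have := den_pos hs (n + 1)
  nlinarith [(by exact_mod_cast hb1 : (1:ℝ) ≤ (b:ℝ))]

lemma den_lt_succ (hs : Irrational s) (n : ℕ) :
    (GenContFract.of s).dens (n + 1) < (GenContFract.of s).dens (n + 2) := by
  have := den_succ_ge hs n
  have := den_pos hs n
  linarith

lemma two_le_den (hs : Irrational s) (n : ℕ) : (2 : ℝ) ≤ (GenContFract.of s).dens (n + 2) := by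
  have := den_succ_ge hs n
  have := one_le_den hs n
  have := one_le_den hs (n + 1)
  linarith

lemma den_mono (hs : Irrational s) : Monotone fun n => (GenContFract.of s).dens n :=
  monotone_nat_of_le_succ fun n => GenContFract.of_den_mono

lemma nat_le_den (hs : Irrational s) (n : ℕ) : (n : ℝ) ≤ (GenContFract.of s).dens n := by
  induction n using Nat.twoStepInduction with
  | zero => simpa using (den_pos hs 0).le
  | one => simpa using one_le_den hs 1
  | more n ih1 ih2 =>
      have := den_succ_ge hs n
      have := one_le_den hs n
      push_cast at ih2 ⊢
      linarith

lemma den_tendsto (hs : Irrational s) :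
    Tendsto (fun n => (GenContFract.of s).dens n) atTop atTop :=
  tendsto_atTop_mono (nat_le_den hs) tendsto_natCast_atTop_atTop

end CFAux

end

namespace CFAux

open GenContFract

variable {s : ℝ}

lemma exists_int_pair (hs : Irrational s) :
    ∀ n : ℕ, (∃ p : ℤ, (GenContFract.of s).nums n = (p : ℝ)) ∧
      (∃ q : ℕ, (GenContFract.of s).dens n = (q : ℝ)) := by
  intro n
  induction n using Nat.twoStepInduction with
  | zero =>
      constructor
      · exact ⟨⌊s⌋, by rw [zeroth_num_eq_h, of_h_eq_floor]⟩
      · exact ⟨1, by rw [zeroth_den_eq_one]; norm_num⟩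
  | one =>
      obtain ⟨gp, hgp⟩ : ∃ gp, (GenContFract.of s).s.get? 0 = some gp :=
        Option.ne_none_iff_exists'.mp (not_term hs 0)
      obtain ⟨ha, b, hb⟩ := of_partNum_eq_one_and_exists_int_partDen_eq hgp
      have hb1 : (1 : ℝ) ≤ gp.b := of_one_le_get?_partDen (partDen_eq_s_b hgp)
      constructor
      · refine ⟨b * ⌊s⌋ + 1, ?_⟩
        rw [first_num_eq hgp, of_h_eq_floor, ha, hb]
        push_cast; ring
      · refine ⟨b.toNat, ?_⟩
        rw [first_den_eq hgp, hb]
        have h0 : (0:ℤ) ≤ b := by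
          have : (1:ℝ) ≤ (b:ℝ) := hb ▸ hb1
          exact_mod_cast le_trans zero_le_one this
        exact_mod_cast (Int.toNat_of_nonneg h0).symm
  | more n ih1 ih2 =>
      obtain ⟨⟨p0, hp0⟩, ⟨q0, hq0⟩⟩ := ih1
      obtain ⟨⟨p1, hp1⟩, ⟨q1, hq1⟩⟩ := ih2
      obtain ⟨b, hb1, hdr, hnr⟩ := den_rec hs n
      constructor
      · exact ⟨b * p1 + p0, by rw [hnr, hp0, hp1]; push_cast; ring⟩
      · refine ⟨b.toNat * q1 + q0, ?_⟩
        rw [hdr, hq0, hq1]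
        have hb0 : (0:ℤ) ≤ b := le_trans zero_le_one hb1
        have hbt : ((b.toNat : ℕ) : ℝ) = (b : ℝ) := by
          exact_mod_cast congrArg (Int.cast : ℤ → ℝ) (Int.toNat_of_nonneg hb0)
        push_cast [hbt]
        try ring

lemma exists_pair (hs : Irrational s) (n : ℕ) :
    ∃ (p : ℤ) (q : ℕ), 0 < q ∧ (GenContFract.of s).nums n = (p : ℝ) ∧
      (GenContFract.of s).dens n = (q : ℝ) := by
  obtain ⟨⟨p, hp⟩, ⟨q, hq⟩⟩ := exists_int_pair hs n
  refine ⟨p, q, ?_, hp, hq⟩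
  have := one_le_den hs n
  rw [hq] at this
  exact_mod_cast lt_of_lt_of_le zero_lt_one this

/-- master error estimate: `qₙ s - pₙ = (-1)^n d` with
`1/(qₙ₊₁+qₙ) < d ≤ 1/qₙ₊₁`. -/
lemma e_master (hs : Irrational s) (n : ℕ) : ∃ d : ℝ,
    (GenContFract.of s).dens n * s - (GenContFract.of s).nums n = (-1 : ℝ) ^ n * d ∧
    1 / ((GenContFract.of s).dens (n + 1) + (GenContFract.of s).dens n) < d ∧
    d ≤ 1 / (GenContFract.of s).dens (n + 1) := by
  obtain ⟨ifp, hifp⟩ := stream_ne_none hs n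
  have hfr_pos : 0 < ifp.fr := fr_pos hs hifp
  have hfr_lt : ifp.fr < 1 := IntFractPair.nth_stream_fr_lt_one hifp
  have hfr_ne : ifp.fr ≠ 0 := ne_of_gt hfr_pos
  -- notations
  set B : ℝ := ((GenContFract.of s).contsAux (n + 1)).b with hB
  set pB : ℝ := ((GenContFract.of s).contsAux n).b with hpB
  have hBden : (GenContFract.of s).dens n = B := by
    rw [den_eq_conts_b, nth_cont_eq_succ_nth_contAux]
  have hpB0 : 0 ≤ pB := zero_le_of_contsAux_b
  have hB1 : 1 ≤ B := hBden ▸ one_le_den hs n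
  have hB0 : 0 < B := lt_of_lt_of_le one_pos hB1
  -- the sequence entry
  have hstream_succ : IntFractPair.stream s (n + 1) = some (IntFractPair.of ifp.fr⁻¹) :=
    IntFractPair.stream_succ_of_some hifp hfr_ne
  have hseq : (GenContFract.of s).s.get? n = some ⟨1, ((IntFractPair.of ifp.fr⁻¹).b : ℝ)⟩ :=
    get?_of_eq_some_of_succ_get?_intFractPair_stream hstream_succ
  have hrec := contsAux_recurrence hseq rfl rfl
  have hden_succ : (GenContFract.of s).dens (n + 1)
      = ((IntFractPair.of ifp.fr⁻¹).b : ℝ) * B + pB := by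
    rw [den_eq_conts_b, nth_cont_eq_succ_nth_contAux, hrec]
    simp [← hB, ← hpB]
  -- floor bounds
  have hfloor_le : ((IntFractPair.of ifp.fr⁻¹).b : ℝ) ≤ ifp.fr⁻¹ := Int.floor_le _
  have hlt_floor : ifp.fr⁻¹ < ((IntFractPair.of ifp.fr⁻¹).b : ℝ) + 1 := Int.lt_floor_add_one _
  have hfr_inv_pos : 0 < ifp.fr⁻¹ := inv_pos.mpr hfr_pos
  -- the formula
  have hsub := sub_convs_eq hifp
  simp only [if_neg hfr_ne] at hsub
  have hformula : s - (GenContFract.of s).convs n = (-1 : ℝ) ^ n / (B * (ifp.fr⁻¹ * B + pB)) :=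
    hsub
  have hdenpos : 0 < ifp.fr⁻¹ * B + pB := by positivity
  refine ⟨B * (1 / (B * (ifp.fr⁻¹ * B + pB))), ?_, ?_, ?_⟩
  · have hconv : (GenContFract.of s).convs n
        = (GenContFract.of s).nums n / (GenContFract.of s).dens n := conv_eq_num_div_den
    have hdenne : (GenContFract.of s).dens n ≠ 0 := ne_of_gt (den_pos hs n)
    have : (GenContFract.of s).dens n * s - (GenContFract.of s).nums n
        = (GenContFract.of s).dens n * (s - (GenContFract.of s).convs n) := by
      rw [hconv]; field_simp
    rw [this, hformula, hBden]; ring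
  · have hBX : B * (1 / (B * (ifp.fr⁻¹ * B + pB))) = 1 / (ifp.fr⁻¹ * B + pB) := by
      field_simp
    rw [hBX, hden_succ, hBden]
    apply one_div_lt_one_div_of_lt hdenpos
    nlinarith
  · have hBX : B * (1 / (B * (ifp.fr⁻¹ * B + pB))) = 1 / (ifp.fr⁻¹ * B + pB) := by
      field_simp
    rw [hBX, hden_succ]
    apply one_div_le_one_div_of_le
    · have hb1 : (1:ℝ) ≤ ((IntFractPair.of ifp.fr⁻¹).b : ℝ) := by
        exact_mod_cast IntFractPair.one_le_succ_nth_stream_b hstream_succ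
      nlinarith
    · nlinarith

end CFAux

namespace CFAux

open GenContFract

variable {s : ℝ}

lemma abs_le_abs_add_of_mul_pos {x y : ℝ} (h : 0 < x * y) : |x| ≤ |x + y| := by
  rcases lt_trichotomy x 0 with hx | hx | hx
  · have hy : y < 0 := by nlinarith
    rw [abs_of_neg hx, abs_of_neg (by linarith)]
    linarith
  · simp [hx]
  · have hy : 0 < y := by nlinarith
    rw [abs_of_pos hx, abs_of_pos (by linarith)]
    linarith

lemma e_opp_sign (hs : Irrational s) (n : ℕ) :
    ((GenContFract.of s).dens n * s - (GenContFract.of s).nums n) *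
      ((GenContFract.of s).dens (n+1) * s - (GenContFract.of s).nums (n+1)) < 0 := by
  obtain ⟨d, hd, hd1, -⟩ := e_master hs n
  obtain ⟨d', hd', hd1', -⟩ := e_master hs (n+1)
  have hdp1 : (0:ℝ) < 1 / ((GenContFract.of s).dens (n+1) + (GenContFract.of s).dens n) :=
    one_div_pos.mpr (by linarith [den_pos hs n, den_pos hs (n+1)])
  have hdp2 : (0:ℝ) < 1 / ((GenContFract.of s).dens (n+2) + (GenContFract.of s).dens (n+1)) :=
    one_div_pos.mpr (by linarith [den_pos hs (n+1), den_pos hs (n+2)])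
  have hdpos : 0 < d := lt_trans hdp1 hd1
  have hdpos' : 0 < d' := lt_trans hdp2 hd1'
  rw [hd, hd']
  have hpow : ((-1:ℝ)^n) * ((-1:ℝ)^(n+1)) = -1 := by
    rw [← pow_add]
    exact Odd.neg_one_pow ⟨n, by ring⟩
  calc (-1:ℝ)^n * d * ((-1:ℝ)^(n+1) * d') = ((-1:ℝ)^n * ((-1:ℝ)^(n+1))) * (d * d') := by ring
    _ = -(d * d') := by rw [hpow]; ring
    _ < 0 := by nlinarith

/-- The convergents are best approximations of the second kind. -/
lemma best_approx (hs : Irrational s) (n : ℕ) (p : ℤ) (q : ℕ) (hq : 0 < q)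
    (hlt : (q : ℝ) < (GenContFract.of s).dens (n + 1)) :
    |(GenContFract.of s).dens n * s - (GenContFract.of s).nums n| ≤ |(q : ℝ) * s - (p : ℝ)| := by
  obtain ⟨pn, qn, hqn0, hpn, hqn⟩ := exists_pair hs n
  obtain ⟨pn1, qn1, hqn10, hpn1, hqn1⟩ := exists_pair hs (n + 1)
  -- integer determinant
  set e : ℤ := (-1) ^ (n + 1) with he
  have hdet : pn * (qn1 : ℤ) - (qn : ℤ) * pn1 = e := by
    have hr := SimpContFract.determinant (s := SimpContFract.of s) (n := n) (not_term hs n)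
    have : ((pn * (qn1:ℤ) - (qn:ℤ) * pn1 : ℤ) : ℝ) = ((e : ℤ) : ℝ) := by
      push_cast
      rw [← hpn, ← hqn, ← hpn1, ← hqn1]
      rw [he]
      push_cast
      exact hr
    exact_mod_cast this
  have he2 : e * e = 1 := by
    rw [he, ← pow_add]
    exact Even.neg_one_pow ⟨n+1, by ring⟩
  -- the coefficients
  set a : ℤ := (p * qn1 - (q : ℤ) * pn1) * e with ha
  set b : ℤ := ((q : ℤ) * pn - p * (qn : ℤ)) * e with hb
  have hqa : a * qn + b * qn1 = (q : ℤ) := by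
    rw [ha, hb]
    linear_combination (e * (q:ℤ)) * hdet + (q:ℤ) * he2
  have hpa : a * pn + b * pn1 = p := by
    rw [ha, hb]
    linear_combination (e * p) * hdet + p * he2
  -- real decomposition
  have hdecomp : (q : ℝ) * s - (p : ℝ)
      = (a : ℝ) * ((GenContFract.of s).dens n * s - (GenContFract.of s).nums n)
        + (b : ℝ) * ((GenContFract.of s).dens (n+1) * s - (GenContFract.of s).nums (n+1)) := by
    rw [hpn, hqn, hpn1, hqn1]
    have h1 : ((q : ℕ) : ℝ) = (a : ℝ) * (qn : ℝ) + (b : ℝ) * (qn1 : ℝ) := by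
      exact_mod_cast congrArg (Int.cast : ℤ → ℝ) hqa.symm
    have h2 : ((p : ℤ) : ℝ) = (a : ℝ) * (pn : ℝ) + (b : ℝ) * (pn1 : ℝ) := by
      exact_mod_cast congrArg (Int.cast : ℤ → ℝ) hpa.symm
    rw [h1, h2]; ring
  have hqn1R : ((qn1 : ℕ) : ℝ) = (GenContFract.of s).dens (n+1) := hqn1.symm
  have hqQlt : (q : ℤ) < (qn1 : ℤ) := by
    have : (q:ℝ) < ((qn1:ℕ):ℝ) := by rw [hqn1R]; exact hlt
    exact_mod_cast this
  rcases eq_or_ne b 0 with hb0 | hb0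
  · -- q = a * qn
    rw [hb0] at hqa
    simp at hqa
    have ha1 : 1 ≤ a := by
      by_contra hcon
      push_neg at hcon
      have : a ≤ 0 := by omega
      have : a * qn ≤ 0 := mul_nonpos_of_nonpos_of_nonneg this (by positivity)
      omega
    rw [hdecomp, hb0]
    push_cast
    rw [zero_mul, add_zero, abs_mul]
    nth_rewrite 1 [← one_mul |(GenContFract.of s).dens n * s - (GenContFract.of s).nums n|]
    apply mul_le_mul_of_nonneg_right _ (abs_nonneg _)
    rw [abs_of_pos (by exact_mod_cast lt_of_lt_of_le zero_lt_one ha1 : (0:ℝ) < (a:ℝ))]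
    exact_mod_cast ha1
  rcases eq_or_ne a 0 with ha0 | ha0
  · -- impossible: q = b * qn1 ≥ qn1
    exfalso
    rw [ha0] at hqa
    simp at hqa
    have hb1 : 1 ≤ b := by
      by_contra hcon
      push_neg at hcon
      have : b ≤ 0 := by omega
      have : b * qn1 ≤ 0 := mul_nonpos_of_nonpos_of_nonneg this (by positivity)
      omega
    have : (qn1 : ℤ) ≤ b * qn1 := le_mul_of_one_le_left (by positivity) hb1
    omega
  · -- a, b both nonzero: opposite signs
    have hab : a * b < 0 := by
      rcases lt_trichotomy a 0 with haneg | haz | hapos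
      · rcases lt_trichotomy b 0 with hbneg | hbz | hbpos
        · exfalso
          have h1 : a * qn ≤ -qn := by nlinarith [(by exact_mod_cast hqn0 : (0:ℤ) < (qn:ℤ))]
          have h2 : b * qn1 ≤ -qn1 := by nlinarith [(by exact_mod_cast hqn10 : (0:ℤ) < (qn1:ℤ))]
          omega
        · exact absurd hbz hb0
        · exact mul_neg_of_neg_of_pos haneg hbpos
      · exact absurd haz ha0
      · rcases lt_trichotomy b 0 with hbneg | hbz | hbpos
        · exact mul_neg_of_pos_of_neg hapos hbneg
        · exact absurd hbz hb0
        · exfalso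
          have h1 : qn ≤ a * qn := le_mul_of_one_le_left (by positivity) hapos
          have h2 : (qn1:ℤ) ≤ b * qn1 := le_mul_of_one_le_left (by positivity) hbpos
          omega
    set x := (a : ℝ) * ((GenContFract.of s).dens n * s - (GenContFract.of s).nums n) with hx
    set y := (b : ℝ) * ((GenContFract.of s).dens (n+1) * s - (GenContFract.of s).nums (n+1)) with hy
    have hxy : 0 < x * y := by
      rw [hx, hy]
      have h1 := e_opp_sign hs n
      have habR : ((a:ℝ)) * (b:ℝ) < 0 := by exact_mod_cast hab
      nlinarith
    have h1 : |(GenContFract.of s).dens n * s - (GenContFract.of s).nums n| ≤ |x| := by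
      rw [hx, abs_mul]
      nth_rewrite 1 [← one_mul |(GenContFract.of s).dens n * s - (GenContFract.of s).nums n|]
      apply mul_le_mul_of_nonneg_right _ (abs_nonneg _)
      exact_mod_cast Int.one_le_abs ha0
    rw [hdecomp]
    exact le_trans h1 (abs_le_abs_add_of_mul_pos hxy)

end CFAux

namespace CFAux

open GenContFract

variable {s : ℝ}

lemma err_eq_div (hs : Irrational s) (n : ℕ) :
    |s - (GenContFract.of s).convs n|
      = |(GenContFract.of s).dens n * s - (GenContFract.of s).nums n|
        / (GenContFract.of s).dens n := by
  have hd := den_pos hs n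
  rw [conv_eq_num_div_den]
  rw [show s - (GenContFract.of s).nums n / (GenContFract.of s).dens n
      = ((GenContFract.of s).dens n * s - (GenContFract.of s).nums n)
        / (GenContFract.of s).dens n by field_simp; try ring]
  rw [abs_div, abs_of_pos hd]

lemma err_lower (hs : Irrational s) (n : ℕ) :
    1 / (2 * ((GenContFract.of s).dens n * (GenContFract.of s).dens (n + 1)))
      < |s - (GenContFract.of s).convs n| := by
  obtain ⟨d, hd, hd1, -⟩ := e_master hs n
  have h1 := den_pos hs n
  have h2 := den_pos hs (n+1)
  have hmono : (GenContFract.of s).dens n ≤ (GenContFract.of s).dens (n+1) :=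
    GenContFract.of_den_mono
  have hdpos : 0 < d := lt_trans (one_div_pos.mpr (by linarith)) hd1
  have habs : |s - (GenContFract.of s).convs n| = d / (GenContFract.of s).dens n := by
    rw [err_eq_div hs n, hd, abs_mul, abs_pow, abs_neg, abs_one, one_pow, one_mul,
      abs_of_pos hdpos]
  rw [habs]
  have hP : (0:ℝ) < 2 * ((GenContFract.of s).dens n * (GenContFract.of s).dens (n+1)) := by
    nlinarith
  rw [div_lt_div_iff₀ hP h1]
  have hd1' : 1 < d * ((GenContFract.of s).dens (n+1) + (GenContFract.of s).dens n) :=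
    (div_lt_iff₀ (by linarith)).mp hd1
  nlinarith [mul_lt_mul_of_pos_left hd1' h1,
    mul_le_mul_of_nonneg_left hmono (mul_nonneg hdpos.le h1.le)]

lemma exists_bracket (hs : Irrational s) (q : ℕ) (hq1 : (1:ℝ) ≤ (q:ℝ)) :
    ∃ n, (GenContFract.of s).dens n ≤ (q:ℝ) ∧ (q:ℝ) < (GenContFract.of s).dens (n + 1) := by
  have hex : ∃ m, (q:ℝ) < (GenContFract.of s).dens m := by
    rcases (tendsto_atTop.mp (den_tendsto hs) ((q:ℝ) + 1)).exists with ⟨m, hm⟩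
    exact ⟨m, by linarith⟩
  classical
  have hm : (q:ℝ) < (GenContFract.of s).dens (Nat.find hex) := Nat.find_spec hex
  have hm0 : Nat.find hex ≠ 0 := by
    intro h0
    rw [h0, zeroth_den_eq_one] at hm
    linarith
  obtain ⟨n, hn⟩ := Nat.exists_eq_succ_of_ne_zero hm0
  have hmin := Nat.find_min hex (m := n) (by omega)
  refine ⟨n, le_of_not_gt hmin, ?_⟩
  rw [hn] at hm
  exact hm

lemma legendre (hs : Irrational s) {p : ℤ} {q : ℕ} (hq : 0 < q) (n : ℕ)
    (hge : (GenContFract.of s).dens n ≤ (q:ℝ)) (hlt : (q:ℝ) < (GenContFract.of s).dens (n + 1))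
    (happ : |s - (p:ℝ)/(q:ℝ)| < 1/(2*(q:ℝ)^2)) :
    (p:ℝ)/(q:ℝ) = (GenContFract.of s).convs n := by
  by_contra hne
  have hQ : (0:ℝ) < (q:ℝ) := by exact_mod_cast hq
  obtain ⟨pn, qn, hqn0, hpn, hqn⟩ := exists_pair hs n
  have hqnR : (0:ℝ) < (qn:ℝ) := by exact_mod_cast hqn0
  have hconv : (GenContFract.of s).convs n = (pn:ℝ)/(qn:ℝ) := by
    rw [conv_eq_num_div_den, hpn, hqn]
  have hDne : p * (qn:ℤ) - (q:ℤ) * pn ≠ 0 := by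
    intro h0
    apply hne
    rw [hconv, div_eq_div_iff hQ.ne' hqnR.ne']
    have h0' : p * (qn:ℤ) = pn * (q:ℤ) := by linarith [h0]
    exact_mod_cast congrArg (Int.cast : ℤ → ℝ) h0'
  have hDabs : (1:ℝ) ≤ |((p * (qn:ℤ) - (q:ℤ) * pn : ℤ):ℝ)| := by
    exact_mod_cast Int.one_le_abs hDne
  have hkey : ((p:ℝ)/(q:ℝ) - (pn:ℝ)/(qn:ℝ)) * ((q:ℝ)*(qn:ℝ))
      = ((p * (qn:ℤ) - (q:ℤ) * pn : ℤ):ℝ) := by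
    push_cast
    field_simp
    try ring
  have hlow : 1/((q:ℝ)*(qn:ℝ)) ≤ |(p:ℝ)/(q:ℝ) - (pn:ℝ)/(qn:ℝ)| := by
    have hre : |(p:ℝ)/(q:ℝ) - (pn:ℝ)/(qn:ℝ)|
        = |((p * (qn:ℤ) - (q:ℤ) * pn : ℤ):ℝ)| / ((q:ℝ)*(qn:ℝ)) := by
      rw [eq_div_iff (mul_pos hQ hqnR).ne', ← abs_of_pos (mul_pos hQ hqnR), ← abs_mul, hkey]
    rw [hre]
    exact (div_le_div_iff_of_pos_right (mul_pos hQ hqnR)).mpr hDabs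
  have hbest := best_approx hs n p q hq hlt
  have hnum : |(qn:ℝ) * s - (pn:ℝ)| ≤ (q:ℝ) * |s - (p:ℝ)/(q:ℝ)| := by
    have habs2 : (q:ℝ) * |s - (p:ℝ)/(q:ℝ)| = |(q:ℝ)*s - (p:ℝ)| := by
      rw [← abs_of_pos hQ, ← abs_mul]
      congr 1
      field_simp
      rw [abs_of_pos hQ]
    rw [habs2, ← hqn, ← hpn]
    exact hbest
  have herr' : |s - (pn:ℝ)/(qn:ℝ)| ≤ (q:ℝ) * |s - (p:ℝ)/(q:ℝ)| / (qn:ℝ) := by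
    rw [← hconv, err_eq_div hs n, hqn, hpn]
    exact (div_le_div_iff_of_pos_right hqnR).mpr hnum
  have htri : |(p:ℝ)/(q:ℝ) - (pn:ℝ)/(qn:ℝ)|
      ≤ |s - (p:ℝ)/(q:ℝ)| + |s - (pn:ℝ)/(qn:ℝ)| := by
    calc |(p:ℝ)/(q:ℝ) - (pn:ℝ)/(qn:ℝ)|
        = |((p:ℝ)/(q:ℝ) - s) + (s - (pn:ℝ)/(qn:ℝ))| := by ring_nf
      _ ≤ |(p:ℝ)/(q:ℝ) - s| + |s - (pn:ℝ)/(qn:ℝ)| := abs_add_le _ _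
      _ = |s - (p:ℝ)/(q:ℝ)| + |s - (pn:ℝ)/(qn:ℝ)| := by rw [abs_sub_comm]
  have hqnq : (qn:ℝ) ≤ (q:ℝ) := by rw [hqn] at hge; exact hge
  have habs_nonneg : 0 ≤ |s - (p:ℝ)/(q:ℝ)| := abs_nonneg _
  have h1 : 1 ≤ (|s - (p:ℝ)/(q:ℝ)| + |s - (pn:ℝ)/(qn:ℝ)|) * ((q:ℝ)*(qn:ℝ)) :=
    (div_le_iff₀ (mul_pos hQ hqnR)).mp (le_trans hlow htri)
  have h2 : |s - (pn:ℝ)/(qn:ℝ)| * (qn:ℝ) ≤ (q:ℝ) * |s - (p:ℝ)/(q:ℝ)| :=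
    (le_div_iff₀ hqnR).mp herr'
  have h3 : |s - (p:ℝ)/(q:ℝ)| * (2*(q:ℝ)^2) < 1 :=
    (lt_div_iff₀ (by positivity)).mp happ
  nlinarith [h1, h2, h3, hqnq, habs_nonneg, hQ, hqnR,
    mul_le_mul_of_nonneg_right h2 hQ.le,
    mul_le_mul_of_nonneg_left hqnq (mul_nonneg habs_nonneg hQ.le)]

end CFAux

namespace CFAux

open GenContFract

variable {s : ℝ}

noncomputable def Sset (s ν : ℝ) : Set (ℤ × ℕ+) :=
  {pq : ℤ × ℕ+ | |s - (pq.1 : ℝ) / ((pq.2 : ℕ) : ℝ)| < ((pq.2 : ℕ) : ℝ) ^ (-ν)}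

noncomputable def rq (s : ℝ) (n : ℕ) : ℝ :=
  Real.log ((GenContFract.of s).dens (n + 1)) / Real.log ((GenContFract.of s).dens n)

noncomputable def LL (s : ℝ) : ℝ≥0∞ := Filter.limsup (fun n : ℕ => ENNReal.ofReal (rq s n)) atTop

lemma two_le_den' (hs : Irrational s) {n : ℕ} (h : 2 ≤ n) :
    (2:ℝ) ≤ (GenContFract.of s).dens n := by
  obtain ⟨m, rfl⟩ : ∃ m, n = m + 2 := ⟨n - 2, by omega⟩
  exact two_le_den hs m

lemma log_den_pos (hs : Irrational s) {n : ℕ} (h : 2 ≤ n) :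
    0 < Real.log ((GenContFract.of s).dens n) :=
  Real.log_pos (by linarith [two_le_den' hs h])

lemma den_lt_den_succ (hs : Irrational s) {n : ℕ} (h : 1 ≤ n) :
    (GenContFract.of s).dens n < (GenContFract.of s).dens (n+1) := by
  obtain ⟨m, rfl⟩ : ∃ m, n = m + 1 := ⟨n - 1, by omega⟩
  exact den_lt_succ hs m

lemma den_strictmono (hs : Irrational s) {m n : ℕ} (h1 : 1 ≤ m) (h : m < n) :
    (GenContFract.of s).dens m < (GenContFract.of s).dens n :=
  lt_of_lt_of_le (den_lt_den_succ hs h1) (den_mono hs (by omega : m + 1 ≤ n))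

lemma rq_gt_one (hs : Irrational s) {n : ℕ} (h : 2 ≤ n) : 1 < rq s n := by
  rw [rq, lt_div_iff₀ (log_den_pos hs h), one_mul]
  exact Real.log_lt_log (by linarith [two_le_den' hs h]) (den_lt_den_succ hs (by omega))

lemma one_le_LL (hs : Irrational s) : 1 ≤ LL s := by
  refine le_limsup_of_frequently_le ?_ (by isBoundedDefault)
  apply Filter.Eventually.frequently
  filter_upwards [eventually_ge_atTop 2] with n hn
  rw [← ENNReal.ofReal_one]
  exact ENNReal.ofReal_le_ofReal (rq_gt_one hs hn).le

lemma mem_sol (hs : Irrational s) {ν : ℝ} {n : ℕ} (h2 : 2 ≤ n)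
    (hcond : ν * Real.log ((GenContFract.of s).dens n)
      < Real.log ((GenContFract.of s).dens n) + Real.log ((GenContFract.of s).dens (n+1))) :
    ∃ pq : ℤ × ℕ+, ((pq.2 : ℕ) : ℝ) = (GenContFract.of s).dens n ∧ pq ∈ Sset s ν := by
  obtain ⟨p, q, hq0, hp, hq⟩ := exists_pair hs n
  have hDn0 : (0:ℝ) < (GenContFract.of s).dens n := den_pos hs n
  have hDn10 : (0:ℝ) < (GenContFract.of s).dens (n+1) := den_pos hs (n+1)
  refine ⟨(p, ⟨q, hq0⟩), by simpa using hq.symm, ?_⟩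
  show |s - (p:ℝ) / (q:ℝ)| < ((q:ℕ):ℝ) ^ (-ν)
  have hqD : ((q:ℕ):ℝ) = (GenContFract.of s).dens n := hq.symm
  have hup : |s - (p:ℝ)/(GenContFract.of s).dens n|
      ≤ 1 / ((GenContFract.of s).dens n * (GenContFract.of s).dens (n+1)) := by
    have := GenContFract.abs_sub_convs_le (v := s) (n := n) (not_term hs n)
    rwa [conv_eq_num_div_den, hp] at this
  have e1 : ((GenContFract.of s).dens n) ^ (-ν)
      = (Real.exp (ν * Real.log ((GenContFract.of s).dens n)))⁻¹ := by
    rw [Real.rpow_def_of_pos hDn0, ← Real.exp_neg]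
    congr 1
    ring
  have e2 : (GenContFract.of s).dens n * (GenContFract.of s).dens (n+1)
      = Real.exp (Real.log ((GenContFract.of s).dens n)
          + Real.log ((GenContFract.of s).dens (n+1))) := by
    rw [Real.exp_add, Real.exp_log hDn0, Real.exp_log hDn10]
  have hstrict : 1 / ((GenContFract.of s).dens n * (GenContFract.of s).dens (n+1))
      < ((GenContFract.of s).dens n) ^ (-ν) := by
    rw [e1, e2, one_div]
    exact inv_strictAnti₀ (Real.exp_pos _) (Real.exp_lt_exp.mpr hcond)
  rw [hqD]
  exact lt_of_le_of_lt hup hstrict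

lemma infinite_sol (hs : Irrational s) {ν : ℝ}
    (hfreq : ∃ᶠ n in atTop, 2 ≤ n ∧ ν * Real.log ((GenContFract.of s).dens n)
      < Real.log ((GenContFract.of s).dens n) + Real.log ((GenContFract.of s).dens (n+1))) :
    (Sset s ν).Infinite := by
  have hT : {n : ℕ | 2 ≤ n ∧ ν * Real.log ((GenContFract.of s).dens n)
      < Real.log ((GenContFract.of s).dens n)
        + Real.log ((GenContFract.of s).dens (n+1))}.Infinite :=
    Nat.frequently_atTop_iff_infinite.mp hfreq
  haveI := hT.to_subtype
  choose f hf1 hf2 using fun t : {n : ℕ | 2 ≤ n ∧ ν * Real.log ((GenContFract.of s).dens n)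
      < Real.log ((GenContFract.of s).dens n)
        + Real.log ((GenContFract.of s).dens (n+1))} => mem_sol hs t.2.1 t.2.2
  apply Set.infinite_of_injective_forall_mem (f := f) _ hf2
  intro t t' heq
  have hD : (GenContFract.of s).dens t.1 = (GenContFract.of s).dens t'.1 := by
    rw [← hf1 t, ← hf1 t', heq]
  by_contra hne
  have hne' : (t:ℕ) ≠ (t':ℕ) := fun h => hne (Subtype.ext h)
  rcases hne'.lt_or_gt with h | h
  · exact absurd hD (ne_of_lt (den_strictmono hs (le_trans one_le_two t.2.1) h))
  · exact absurd hD.symm (ne_of_lt (den_strictmono hs (le_trans one_le_two t'.2.1) h))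

lemma le_approx {ν : ℝ} (h : (Sset s ν).Infinite) : ENNReal.ofReal ν ≤ approxExp s :=
  le_iSup₂ (f := fun (ν : ℝ) (_ : ({pq : ℤ × ℕ+ |
    |s - (pq.1 : ℝ) / ((pq.2 : ℕ) : ℝ)| < ((pq.2 : ℕ) : ℝ) ^ (-ν)}).Infinite) =>
      ENNReal.ofReal ν) ν h

lemma freq_cond_of_lt (hs : Irrational s) {ν : ℝ} (hν : ENNReal.ofReal ν < 1 + LL s) :
    ∃ᶠ n in atTop, 2 ≤ n ∧ ν * Real.log ((GenContFract.of s).dens n)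
      < Real.log ((GenContFract.of s).dens n) + Real.log ((GenContFract.of s).dens (n+1)) := by
  rcases le_or_gt ν 2 with h2 | h2
  · apply Filter.Eventually.frequently
    filter_upwards [eventually_ge_atTop 2] with n hn
    refine ⟨hn, ?_⟩
    have hlog := log_den_pos hs hn
    have hlt : Real.log ((GenContFract.of s).dens n)
        < Real.log ((GenContFract.of s).dens (n+1)) :=
      Real.log_lt_log (by linarith [two_le_den' hs hn]) (den_lt_den_succ hs (by omega))
    nlinarith
  · have h1 : ENNReal.ofReal (ν - 1) < LL s := by
      have heq : ENNReal.ofReal ν = 1 + ENNReal.ofReal (ν - 1) := by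
        rw [← ENNReal.ofReal_one, ← ENNReal.ofReal_add (by norm_num) (by linarith)]
        norm_num
      rw [heq] at hν
      exact lt_of_add_lt_add_left hν
    have hfr := frequently_lt_of_lt_limsup (u := fun n : ℕ => ENNReal.ofReal (rq s n))
      (f := atTop) (by isBoundedDefault) h1
    refine ((eventually_ge_atTop 2).and_frequently hfr).mono ?_
    rintro n ⟨hn2, hlt⟩
    refine ⟨hn2, ?_⟩
    have hrlt : ν - 1 < rq s n := by
      by_contra hle
      push_neg at hle
      exact absurd (ENNReal.ofReal_le_ofReal hle) (not_le.mpr hlt)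
    have hlog := log_den_pos hs hn2
    have hmul : (ν - 1) * Real.log ((GenContFract.of s).dens n)
        < rq s n * Real.log ((GenContFract.of s).dens n) :=
      mul_lt_mul_of_pos_right hrlt hlog
    rw [rq, div_mul_cancel₀ _ (ne_of_gt hlog)] at hmul
    linarith

lemma ge_dir (hs : Irrational s) : 1 + LL s ≤ approxExp s := by
  apply le_of_forall_lt
  intro c hc
  obtain ⟨ν, hν0, hcν, hν⟩ := ENNReal.lt_iff_exists_real_btwn.mp hc
  exact lt_of_lt_of_le hcν (le_approx (infinite_sol hs (freq_cond_of_lt hs hν)))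

end CFAux

namespace CFAux

open GenContFract

variable {s : ℝ}

lemma exists_big_sol {ν : ℝ} (hinf : (Sset s ν).Infinite) (hν : 0 < ν) (M : ℝ) :
    ∃ pq ∈ Sset s ν, M < ((pq.2 : ℕ) : ℝ) := by
  by_contra hcon
  push_neg at hcon
  apply hinf
  set K : ℤ := ⌈(|s| + 1) * M⌉ with hK
  have hsub : Sset s ν ⊆ (fun pq : ℤ × ℕ+ => (pq.1, (pq.2 : ℕ))) ⁻¹'
      (Set.Icc (-K) K ×ˢ Set.Icc 1 ⌈M⌉₊) := by
    rintro ⟨p, q⟩ hpq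
    have hqM : ((q:ℕ):ℝ) ≤ M := hcon _ hpq
    have hq1 : (1:ℝ) ≤ ((q:ℕ):ℝ) := by exact_mod_cast q.2
    have hq0 : (0:ℝ) < ((q:ℕ):ℝ) := lt_of_lt_of_le zero_lt_one hq1
    have happ : |s - (p:ℝ)/((q:ℕ):ℝ)| < ((q:ℕ):ℝ) ^ (-ν) := hpq
    have hle1 : ((q:ℕ):ℝ) ^ (-ν) ≤ 1 :=
      Real.rpow_le_one_of_one_le_of_nonpos hq1 (by linarith)
    have h1 : |(p:ℝ)/((q:ℕ):ℝ)| ≤ |s| + 1 := by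
      have h2 : |(p:ℝ)/((q:ℕ):ℝ)| - |s| ≤ |(p:ℝ)/((q:ℕ):ℝ) - s| :=
        abs_sub_abs_le_abs_sub _ _
      rw [abs_sub_comm] at h2
      linarith
    have hpabs : |(p:ℝ)| ≤ (|s| + 1) * M := by
      have : |(p:ℝ)| = |(p:ℝ)/((q:ℕ):ℝ)| * ((q:ℕ):ℝ) := by
        rw [abs_div, abs_of_pos hq0, div_mul_cancel₀ _ hq0.ne']
      rw [this]
      have hs1 : (0:ℝ) ≤ |s| + 1 := by positivity
      calc |(p:ℝ)/((q:ℕ):ℝ)| * ((q:ℕ):ℝ) ≤ (|s| + 1) * ((q:ℕ):ℝ) :=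
            mul_le_mul_of_nonneg_right h1 hq0.le
        _ ≤ (|s| + 1) * M := mul_le_mul_of_nonneg_left hqM hs1
    constructor
    · -- p component
      have hpK : |p| ≤ K := by
        have : |(p:ℝ)| ≤ (K:ℝ) := le_trans hpabs (Int.le_ceil _)
        exact_mod_cast (by rwa [← Int.cast_abs] at this : ((|p|:ℤ):ℝ) ≤ (K:ℝ))
      rw [Set.mem_Icc]
      constructor
      · linarith [(abs_le.mp hpK).1]
      · exact (abs_le.mp hpK).2
    · -- q component
      rw [Set.mem_Icc]
      refine ⟨q.2, ?_⟩
      have : ((q:ℕ):ℝ) ≤ (⌈M⌉₊ : ℝ) := le_trans hqM (Nat.le_ceil _)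
      exact_mod_cast this
  have hfin : ((fun pq : ℤ × ℕ+ => (pq.1, (pq.2 : ℕ))) ⁻¹'
      (Set.Icc (-K) K ×ˢ Set.Icc 1 ⌈M⌉₊)).Finite := by
    apply Set.Finite.preimage
    · intro a _ b _ h
      simp only [Prod.mk.injEq] at h
      exact Prod.ext h.1 (PNat.coe_injective h.2)
    · exact (Set.finite_Icc _ _).prod (Set.finite_Icc _ _)
  exact hfin.subset hsub

lemma le_dir (hs : Irrational s) : approxExp s ≤ 1 + LL s := by
  refine iSup₂_le fun ν hinf0 => ?_
  have hinf : (Sset s ν).Infinite := hinf0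
  rcases le_or_gt ν 2 with h2 | h2
  · calc ENNReal.ofReal ν ≤ ENNReal.ofReal 2 := ENNReal.ofReal_le_ofReal h2
      _ = 1 + 1 := by norm_num
      _ ≤ 1 + LL s := add_le_add_right (one_le_LL hs) 1
  rcases eq_top_or_lt_top (LL s) with hL | _hL
  · rw [hL]
    simp
  have hδclaim : ∀ δ : ℝ, 0 < δ → ∃ᶠ n in atTop, ν - 1 - δ ≤ rq s n := by
    intro δ hδ
    rw [Filter.frequently_atTop]
    intro N
    obtain ⟨N₀, hN₀⟩ := (tendsto_atTop.mp (den_tendsto hs) (Real.exp (Real.log 2 / δ))).exists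
    set N1 := max N N₀ + 2 with hN1
    set M : ℝ := max ((GenContFract.of s).dens N1) (2 ^ ((1:ℝ)/(ν-2))) with hM
    obtain ⟨pq, hmem, hMq⟩ := exists_big_sol hinf (by linarith) M
    obtain ⟨p, q⟩ := pq
    simp only at hmem hMq
    have hq1 : (1:ℝ) ≤ ((q:ℕ):ℝ) := by exact_mod_cast q.2
    have hq0 : (0:ℝ) < ((q:ℕ):ℝ) := lt_of_lt_of_le zero_lt_one hq1
    obtain ⟨n, hge, hlt⟩ := exists_bracket hs (q:ℕ) hq1
    have hn1 : N1 < n + 1 := by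
      by_contra hcon
      push_neg at hcon
      have hmono := den_mono hs hcon
      have hd1 : ((q:ℕ):ℝ) < (GenContFract.of s).dens N1 := lt_of_lt_of_le hlt hmono
      have hd2 : (GenContFract.of s).dens N1 ≤ M := le_max_left _ _
      linarith
    have hnN : N ≤ n := by omega
    have hn2 : 2 ≤ n := by omega
    -- q^(-ν) ≤ 1/(2 q²)
    have hq2 : (2:ℝ) ≤ ((q:ℕ):ℝ) ^ (ν - 2 : ℝ) := by
      have hbase : (2:ℝ) ^ ((1:ℝ)/(ν-2)) ≤ ((q:ℕ):ℝ) :=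
        le_trans (le_max_right _ _) hMq.le
      have hν2 : (0:ℝ) < ν - 2 := by linarith
      calc (2:ℝ) = ((2:ℝ) ^ ((1:ℝ)/(ν-2))) ^ (ν-2 : ℝ) := by
            rw [← Real.rpow_mul (by norm_num), one_div,
              inv_mul_cancel₀ hν2.ne', Real.rpow_one]
        _ ≤ ((q:ℕ):ℝ) ^ (ν-2:ℝ) :=
            Real.rpow_le_rpow (Real.rpow_nonneg (by norm_num) _) hbase hν2.le
    have hsmall : (((q:ℕ)):ℝ) ^ (-ν) ≤ 1/(2 * ((q:ℕ):ℝ)^2) := by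
      have hsplit : ((q:ℕ):ℝ) ^ (ν:ℝ) = ((q:ℕ):ℝ)^(2:ℝ) * ((q:ℕ):ℝ)^(ν-2:ℝ) := by
        rw [← Real.rpow_add hq0]
        norm_num
      have hr2 : ((q:ℕ):ℝ)^(2:ℝ) = ((q:ℕ):ℝ)^(2:ℕ) := by
        rw [show ((2:ℝ)) = ((2:ℕ):ℝ) by norm_num, Real.rpow_natCast]
      have h2q : 2 * ((q:ℕ):ℝ)^2 ≤ ((q:ℕ):ℝ)^(ν:ℝ) := by
        rw [hsplit, hr2]
        nlinarith [sq_nonneg ((q:ℕ):ℝ)]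
      rw [Real.rpow_neg hq0.le, one_div]
      exact inv_anti₀ (by positivity) h2q
    have happ : |s - (p:ℝ)/((q:ℕ):ℝ)| < ((q:ℕ):ℝ)^(-ν) := hmem
    have happ2 : |s - (p:ℝ)/((q:ℕ):ℝ)| < 1/(2*((q:ℕ):ℝ)^2) := lt_of_lt_of_le happ hsmall
    have hleg := legendre hs q.2 n hge hlt happ2
    have hlow := err_lower hs n
    rw [← hleg] at hlow
    have hbase2 : ((q:ℕ):ℝ)^(-ν) ≤ ((GenContFract.of s).dens n)^(-ν) :=
      Real.rpow_le_rpow_of_nonpos (den_pos hs n) hge (by linarith)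
    have hfin : 1/(2*((GenContFract.of s).dens n * (GenContFract.of s).dens (n+1)))
        < ((GenContFract.of s).dens n)^(-ν) :=
      lt_of_lt_of_le (lt_trans hlow happ) hbase2
    have hDn0 := den_pos hs n
    have hDn10 := den_pos hs (n+1)
    have hlogn := log_den_pos hs hn2
    have hlogs : ν * Real.log ((GenContFract.of s).dens n)
        < Real.log 2 + Real.log ((GenContFract.of s).dens n)
          + Real.log ((GenContFract.of s).dens (n+1)) := by
      have h1 : Real.log (1/(2*((GenContFract.of s).dens n * (GenContFract.of s).dens (n+1))))
          < Real.log (((GenContFract.of s).dens n)^(-ν)) :=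
        Real.log_lt_log (by rw [one_div]; exact inv_pos.mpr (by nlinarith)) hfin
      rw [Real.log_rpow hDn0, one_div, Real.log_inv,
        Real.log_mul (by norm_num) (ne_of_gt (mul_pos hDn0 hDn10)),
        Real.log_mul (ne_of_gt hDn0) (ne_of_gt hDn10)] at h1
      linarith
    -- log 2 / log (dens n) ≤ δ
    have hlog2 : Real.log 2 / Real.log ((GenContFract.of s).dens n) ≤ δ := by
      have hd : Real.exp (Real.log 2 / δ) ≤ (GenContFract.of s).dens n := by
        calc Real.exp (Real.log 2 / δ) ≤ (GenContFract.of s).dens N₀ := hN₀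
          _ ≤ (GenContFract.of s).dens n := den_mono hs (by omega)
      have hlogd : Real.log 2 / δ ≤ Real.log ((GenContFract.of s).dens n) := by
        have := Real.log_le_log (Real.exp_pos _) hd
        rwa [Real.log_exp] at this
      rw [div_le_iff₀ hlogn]
      calc Real.log 2 = δ * (Real.log 2 / δ) := by field_simp
        _ ≤ δ * Real.log ((GenContFract.of s).dens n) :=
            mul_le_mul_of_nonneg_left hlogd hδ.le
    refine ⟨n, hnN, ?_⟩
    have hdiv : ν < (Real.log 2 + Real.log ((GenContFract.of s).dens n)
        + Real.log ((GenContFract.of s).dens (n+1))) / Real.log ((GenContFract.of s).dens n) :=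
      (lt_div_iff₀ hlogn).mpr hlogs
    have hexp : (Real.log 2 + Real.log ((GenContFract.of s).dens n)
        + Real.log ((GenContFract.of s).dens (n+1))) / Real.log ((GenContFract.of s).dens n)
        = Real.log 2 / Real.log ((GenContFract.of s).dens n) + 1 + rq s n := by
      rw [rq]
      field_simp
    rw [hexp] at hdiv
    linarith
  refine ENNReal.le_of_forall_pos_le_add ?_
  intro ε hε _h1L
  set δ : ℝ := min (ε:ℝ) 1 with hδdef
  have hδ0 : 0 < δ := lt_min (by exact_mod_cast hε) one_pos
  have hfr := hδclaim δ hδ0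
  have hle : ENNReal.ofReal (ν - 1 - δ) ≤ LL s := by
    refine le_limsup_of_frequently_le ?_ (by isBoundedDefault)
    exact hfr.mono fun n h => ENNReal.ofReal_le_ofReal h
  calc ENNReal.ofReal ν = ENNReal.ofReal ((ν - 1 - δ) + (1 + δ)) := by
        congr 1
        ring
    _ ≤ ENNReal.ofReal (ν - 1 - δ) + ENNReal.ofReal (1 + δ) := ENNReal.ofReal_add_le
    _ ≤ LL s + (1 + ENNReal.ofReal δ) := by
        refine add_le_add hle ?_
        rw [ENNReal.ofReal_add (by norm_num) hδ0.le, ENNReal.ofReal_one]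
    _ ≤ LL s + (1 + (ε : ℝ≥0∞)) := by
        refine add_le_add_right (add_le_add_right ?_ 1) _
        calc ENNReal.ofReal δ ≤ ENNReal.ofReal (ε:ℝ) :=
              ENNReal.ofReal_le_ofReal (min_le_left _ _)
          _ = (ε : ℝ≥0∞) := ENNReal.ofReal_coe_nnreal
    _ = 1 + LL s + (ε : ℝ≥0∞) := by ring

end CFAux

/-- For irrational `s` with continued fraction convergent denominators `q_n` and
`r_n = log q_{n+1} / log q_n`, one has `μ(s) = 1 + limsup r_n`. -/
theorem approxExp_eq_one_add_limsup (s : ℝ) (hs : Irrational s) :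
    approxExp s = 1 + Filter.limsup
      (fun n : ℕ => ENNReal.ofReal
        (Real.log ((GenContFract.of s).dens (n + 1)) / Real.log ((GenContFract.of s).dens n)))
      atTop := by
  exact le_antisymm (CFAux.le_dir hs) (CFAux.ge_dir hs)

-- axiom check
-- #print axioms approxExp_eq_one_add_limsup
end
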